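/- arXiv:2010.06125 — 2 statements merged into one kernel-verified Lean document; each statement's English description precedes it below -/
import Mathlib

section
/- For every ordinal α < ω₁, the set of conditions q ∈ Q with α_q > α is dense in Q: for every p ∈ Q there exists q ≤ p such that the height α_q of the tree T_q is greater than α. -/
universe u

/-- The underlying data of a condition `p = (T_p, <_p, Π_p)` of the poset `Q`:
a set `tp` of countable ordinals carrying a strict order `lt` whose sets of
predecessors are well-ordered, together with a set `dp ⊆ ω₂` of indices and,
for each index `ξ`, a map `pi ξ` (intended as the partial isomorphism
`π^p_ξ`). -/
structure QPre : Type (u + 1) where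
  /-- The underlying set of the tree, a set of ordinals. -/
  tp : Set Ordinal.{u}
  /-- The tree order. -/
  lt : Ordinal.{u} → Ordinal.{u} → Prop
  /-- The index set of the isomorphisms. -/
  dp : Set Ordinal.{u}
  /-- The isomorphisms `π^p_ξ`, coded as total functions. -/
  pi : Ordinal.{u} → Ordinal.{u} → Ordinal.{u}
  lt_mem : ∀ x y, lt x y → x ∈ tp ∧ y ∈ tp
  wo : ∀ t, IsWellOrder {s : Ordinal.{u} // lt s t} (fun a b => lt a.1 b.1)

/-- The height of `t` in the tree of the condition `p`: the order type of the
set of its `p.lt`-predecessors. -/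
noncomputable def QPre.ht (p : QPre.{u}) (t : Ordinal.{u}) : Ordinal.{u + 1} :=
  @Ordinal.type {s : Ordinal.{u} // p.lt s t} (fun a b => p.lt a.1 b.1) (p.wo t)

/-- The height `α_p` of the tree of the condition `p`: the least ordinal `α`
such that the `α`-th level of the tree is empty. -/
noncomputable def QPre.alphap (p : QPre.{u}) : Ordinal.{u + 1} :=
  sInf {α | ∀ t ∈ p.tp, p.ht t ≠ α}

/-- The cone `(T_p)_x`: the set of elements of the tree comparable with `x`. -/
def QPre.cone (p : QPre.{u}) (x t : Ordinal.{u}) : Prop :=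
  t ∈ p.tp ∧ (p.lt t x ∨ t = x ∨ p.lt x t)

/-- `f` is a tree isomorphism from the cone `(T_p)_x` onto the cone
`(T_p)_y`. -/
def QPre.IsConeIso (p : QPre.{u}) (f : Ordinal.{u} → Ordinal.{u})
    (x y : Ordinal.{u}) : Prop :=
  (∀ t, p.cone x t → p.cone y (f t)) ∧
  (∀ s, p.cone y s → ∃ t, p.cone x t ∧ f t = s) ∧
  (∀ s t, p.cone x s → p.cone x t → f s = f t → s = t) ∧
  (∀ s t, p.cone x s → p.cone x t → (p.lt s t ↔ p.lt (f s) (f t)))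

/-- `p` is a condition of the poset `Q`: `T_p` is a countable subset of `ω₁`,
`<_p` is a (strict) tree order on `T_p` of height `α_p` which is normal (every
element is comparable with some element of every lower level), `D_p` is a
countable subset of `ω₂` and each `π^p_ξ` (`ξ ∈ D_p`) is a tree isomorphism
between two cones whose roots have the same height. -/
def IsQCond (p : QPre.{u}) : Prop :=
  p.tp ⊆ Set.Iio (Cardinal.aleph 1).ord ∧
  p.tp.Countable ∧
  (∀ x ∈ p.tp, ¬ p.lt x x) ∧
  (∀ x y z : Ordinal.{u}, p.lt x y → p.lt y z → p.lt x z) ∧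
  (∀ t ∈ p.tp, p.ht t < p.alphap) ∧
  (∀ t ∈ p.tp, ∀ β < p.alphap, ∃ s ∈ p.tp, p.ht s = β ∧
    (p.lt s t ∨ s = t ∨ p.lt t s)) ∧
  p.dp ⊆ Set.Iio (Cardinal.aleph 2).ord ∧
  p.dp.Countable ∧
  (∀ ξ ∈ p.dp, ∃ x ∈ p.tp, ∃ y ∈ p.tp, p.ht x = p.ht y ∧
    p.IsConeIso (p.pi ξ) x y)

/-- The order of the poset `Q`: `q ≤ p` iff `T_q` end-extends `T_p` (i.e.
`T_p` is exactly the set of elements of `T_q` of height `< α_p` and `<_p` is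
the restriction of `<_q`), `D_p ⊆ D_q`, and `π^q_ξ ↾ T_p = π^p_ξ` for every
`ξ ∈ D_p`. -/
def QLe (q p : QPre.{u}) : Prop :=
  p.tp = {t ∈ q.tp | q.ht t < p.alphap} ∧
  (∀ x y : Ordinal.{u}, x ∈ p.tp → y ∈ p.tp → (p.lt x y ↔ q.lt x y)) ∧
  p.dp ⊆ q.dp ∧
  (∀ ξ ∈ p.dp, ∀ t ∈ p.tp, q.pi ξ t = p.pi ξ t)

namespace QTall
open Ordinal Set

variable {p : QPre.{u}}

theorem ht_eq_typein (htr : ∀ x y z : Ordinal.{u}, p.lt x y → p.lt y z → p.lt x z)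
    {a b : Ordinal.{u}} (h : p.lt a b) :
    p.ht a = @Ordinal.typein _ (fun u v : {s // p.lt s b} => p.lt u.1 v.1) (p.wo b) ⟨a, h⟩ := by
  letI := p.wo b
  letI := p.wo a
  rw [← Ordinal.type_subrel]
  refine Ordinal.type_eq.2 ⟨RelIso.mk (Equiv.mk (fun s => ⟨⟨s.1, htr _ _ _ s.2 h⟩, s.2⟩)
    (fun c => ⟨c.1.1, c.2⟩) (fun s => rfl) (fun c => rfl)) Iff.rfl⟩

theorem ht_lt_ht (htr : ∀ x y z : Ordinal.{u}, p.lt x y → p.lt y z → p.lt x z)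
    {a b : Ordinal.{u}} (h : p.lt a b) : p.ht a < p.ht b := by
  letI := p.wo b
  rw [ht_eq_typein htr h]
  exact Ordinal.typein_lt_type _ _

theorem exists_lt_ht (htr : ∀ x y z : Ordinal.{u}, p.lt x y → p.lt y z → p.lt x z)
    {b : Ordinal.{u}} {β : Ordinal.{u+1}} (hb : β < p.ht b) :
    ∃ s, p.lt s b ∧ p.ht s = β := by
  letI := p.wo b
  obtain ⟨c, hc⟩ := Ordinal.typein_surj (fun u v : {s // p.lt s b} => p.lt u.1 v.1) hb
  refine ⟨c.1, c.2, ?_⟩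
  rw [ht_eq_typein htr c.2]
  exact hc

theorem cmp_of_lt_lt {a b c : Ordinal.{u}} (h1 : p.lt a c) (h2 : p.lt b c) :
    p.lt a b ∨ a = b ∨ p.lt b a := by
  letI := p.wo c
  rcases trichotomous_of (fun u v : {s // p.lt s c} => p.lt u.1 v.1) ⟨a, h1⟩ ⟨b, h2⟩ with h | h | h
  · exact Or.inl h
  · exact Or.inr (Or.inl (congrArg Subtype.val h))
  · exact Or.inr (Or.inr h)

theorem eq_of_cmp_ht (htr : ∀ x y z : Ordinal.{u}, p.lt x y → p.lt y z → p.lt x z)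
    {a b : Ordinal.{u}} (hc : p.lt a b ∨ a = b ∨ p.lt b a) (hh : p.ht a = p.ht b) : a = b := by
  rcases hc with h | h | h
  · exact absurd hh (ne_of_lt (ht_lt_ht htr h))
  · exact h
  · exact absurd hh.symm (ne_of_lt (ht_lt_ht htr h))

/-- A cofinal downward-closed branch. -/
def IsBranch (p : QPre.{u}) (B : Set Ordinal.{u}) : Prop :=
  B ⊆ p.tp ∧ (∀ a ∈ B, ∀ b ∈ B, p.lt a b ∨ a = b ∨ p.lt b a) ∧
  (∀ a b, b ∈ B → p.lt a b → a ∈ B) ∧ (∀ β < p.alphap, ∃ b ∈ B, p.ht b = β)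

theorem exists_ht_eq_of_lt_alphap {β : Ordinal.{u+1}} (hβ : β < p.alphap) :
    ∃ t ∈ p.tp, p.ht t = β := by
  by_contra hcon
  push_neg at hcon
  exact absurd hβ (not_lt.2 (csInf_le' hcon))

theorem exists_branch (htr : ∀ x y z : Ordinal.{u}, p.lt x y → p.lt y z → p.lt x z)
    (hcnt : p.tp.Countable)
    (hlt : ∀ t ∈ p.tp, p.ht t < p.alphap)
    (hnorm : ∀ t ∈ p.tp, ∀ β < p.alphap, ∃ s ∈ p.tp, p.ht s = β ∧
      (p.lt s t ∨ s = t ∨ p.lt t s))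
    {t0 : Ordinal.{u}} (ht0 : t0 ∈ p.tp) :
    ∃ B : Set Ordinal.{u}, IsBranch p B ∧ t0 ∈ B := by
  have hsub : Set.Iio p.alphap ⊆ p.ht '' p.tp := by
    intro β hβ
    obtain ⟨t, ht, he⟩ := exists_ht_eq_of_lt_alphap hβ
    exact ⟨t, ht, he⟩
  have hIcnt : (Set.Iio p.alphap).Countable := (hcnt.image p.ht).mono hsub
  have hIne : (Set.Iio p.alphap).Nonempty := ⟨p.ht t0, hlt _ ht0⟩
  obtain ⟨g, hg⟩ := Set.Countable.exists_eq_range hIcnt hIne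
  have hgmem : ∀ n, g n < p.alphap := by
    intro n
    have : g n ∈ Set.Iio p.alphap := hg ▸ Set.mem_range_self n
    exact this
  have step : ∀ s : {x : Ordinal.{u} // x ∈ p.tp}, ∀ n : ℕ,
      ∃ s' : {x : Ordinal.{u} // x ∈ p.tp},
        p.ht s'.1 = max (g n) (p.ht s.1) ∧ (s.1 = s'.1 ∨ p.lt s.1 s'.1) := by
    intro s n
    obtain ⟨w, hw1, hw2, hw3⟩ := hnorm s.1 s.2 (max (g n) (p.ht s.1))
      (max_lt (hgmem n) (hlt _ s.2))
    refine ⟨⟨w, hw1⟩, hw2, ?_⟩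
    rcases hw3 with h | h | h
    · exact absurd (hw2 ▸ le_max_right (g n) (p.ht s.1)) (not_le.2 (ht_lt_ht htr h))
    · exact Or.inl h.symm
    · exact Or.inr h
  choose F hF1 hF2 using step
  let seq : ℕ → {x : Ordinal.{u} // x ∈ p.tp} :=
    fun n => Nat.rec ⟨t0, ht0⟩ (fun n prev => F prev n) n
  have hseqS : ∀ n, seq (n + 1) = F (seq n) n := fun n => rfl
  have hstep : ∀ n, (seq n).1 = (seq (n+1)).1 ∨ p.lt (seq n).1 (seq (n+1)).1 := by
    intro n; rw [hseqS n]; exact hF2 (seq n) n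
  have hmono : ∀ n m, n ≤ m → ((seq n).1 = (seq m).1 ∨ p.lt (seq n).1 (seq m).1) := by
    intro n m h
    induction m with
    | zero => rw [Nat.le_zero.1 h]; exact Or.inl rfl
    | succ m ih =>
      rcases Nat.lt_or_ge n (m+1) with hlt' | hge
      · have h1 := ih (Nat.lt_succ_iff.1 hlt')
        rcases h1 with h1 | h1
        · rw [h1]; exact hstep m
        · rcases hstep m with h2 | h2
          · exact Or.inr (h2 ▸ h1)
          · exact Or.inr (htr _ _ _ h1 h2)
      · have : n = m + 1 := le_antisymm h hge
        rw [this]; exact Or.inl rfl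
  refine ⟨{s | ∃ n, s = (seq n).1 ∨ p.lt s (seq n).1}, ⟨?_, ?_, ?_, ?_⟩, ⟨0, Or.inl rfl⟩⟩
  · rintro s ⟨n, h | h⟩
    · rw [h]; exact (seq n).2
    · exact (p.lt_mem _ _ h).1
  · have liftup : ∀ a n m, n ≤ m → (a = (seq n).1 ∨ p.lt a (seq n).1) →
        (a = (seq m).1 ∨ p.lt a (seq m).1) := by
      intro a n m hnm h
      rcases hmono n m hnm with h1 | h1
      · rw [← h1]; exact h
      · rcases h with h | h
        · exact Or.inr (h ▸ h1)
        · exact Or.inr (htr _ _ _ h h1)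
    rintro a ⟨n, ha⟩ b ⟨m, hb⟩
    have ha' := liftup a n (max n m) (le_max_left n m) ha
    have hb' := liftup b m (max n m) (le_max_right n m) hb
    rcases ha' with ha' | ha' <;> rcases hb' with hb' | hb'
    · exact Or.inr (Or.inl (ha'.trans hb'.symm))
    · exact Or.inr (Or.inr (ha' ▸ hb'))
    · exact Or.inl (hb' ▸ ha')
    · exact cmp_of_lt_lt ha' hb'
  · rintro a b ⟨n, hb | hb⟩ hab
    · exact ⟨n, Or.inr (hb ▸ hab)⟩
    · exact ⟨n, Or.inr (htr _ _ _ hab hb)⟩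
  · intro β hβ
    have : β ∈ Set.range g := hg ▸ hβ
    obtain ⟨n, hn⟩ := this
    have hle : β ≤ p.ht (seq (n+1)).1 := by
      rw [hseqS n, hF1]
      exact hn ▸ le_max_left (g n) (p.ht (seq n).1)
    rcases eq_or_lt_of_le hle with he | hlt'
    · exact ⟨(seq (n+1)).1, ⟨n+1, Or.inl rfl⟩, he.symm⟩
    · obtain ⟨s, hs1, hs2⟩ := exists_lt_ht htr hlt'
      exact ⟨s, ⟨n+1, Or.inr hs1⟩, hs2⟩

theorem cone_of_lt (htr : ∀ x y z : Ordinal.{u}, p.lt x y → p.lt y z → p.lt x z)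
    {x t s : Ordinal.{u}} (hct : p.cone x t) (hst : p.lt s t) : p.cone x s := by
  refine ⟨(p.lt_mem _ _ hst).1, ?_⟩
  rcases hct.2 with h | h | h
  · exact Or.inl (htr _ _ _ hst h)
  · exact Or.inl (h ▸ hst)
  · exact cmp_of_lt_lt hst h

theorem coneIso_ht (htr : ∀ x y z : Ordinal.{u}, p.lt x y → p.lt y z → p.lt x z)
    {f : Ordinal.{u} → Ordinal.{u}} {x y : Ordinal.{u}}
    (hiso : p.IsConeIso f x y) {t : Ordinal.{u}} (hct : p.cone x t) :
    p.ht (f t) = p.ht t := by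
  obtain ⟨h1, h2, h3, h4⟩ := hiso
  letI := p.wo t
  letI := p.wo (f t)
  have hft : p.cone y (f t) := h1 t hct
  have Fdef : ∀ s : {s : Ordinal.{u} // p.lt s t}, p.lt (f s.1) (f t) := by
    intro s
    exact (h4 s.1 t (cone_of_lt htr hct s.2) hct).1 s.2
  have hbij : Function.Bijective (fun s : {s : Ordinal.{u} // p.lt s t} =>
      (⟨f s.1, Fdef s⟩ : {s : Ordinal.{u} // p.lt s (f t)})) := by
    constructor
    · intro a b hab
      have : f a.1 = f b.1 := congrArg Subtype.val hab
      exact Subtype.ext (h3 a.1 b.1 (cone_of_lt htr hct a.2) (cone_of_lt htr hct b.2) this)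
    · rintro ⟨s', hs'⟩
      have hcs' : p.cone y s' := cone_of_lt htr hft hs'
      obtain ⟨u', hu', hfu⟩ := h2 s' hcs'
      have : p.lt u' t := (h4 u' t hu' hct).2 (hfu ▸ hs')
      exact ⟨⟨u', this⟩, Subtype.ext hfu⟩
  have e : ∀ a b : {s : Ordinal.{u} // p.lt s t},
      (p.lt (f a.1) (f b.1) ↔ p.lt a.1 b.1) := by
    intro a b
    exact (h4 a.1 b.1 (cone_of_lt htr hct a.2) (cone_of_lt htr hct b.2)).symm
  exact (Ordinal.type_eq.2 ⟨RelIso.mk (Equiv.ofBijective _ hbij) (e _ _)⟩).symm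

theorem coneIso_fix (htr : ∀ x y z : Ordinal.{u}, p.lt x y → p.lt y z → p.lt x z)
    {f : Ordinal.{u} → Ordinal.{u}} {x y : Ordinal.{u}}
    (hx : x ∈ p.tp) (hxy : p.ht x = p.ht y)
    (hiso : p.IsConeIso f x y) : f x = y := by
  have hcx : p.cone x x := ⟨hx, Or.inr (Or.inl rfl)⟩
  have h1 := hiso.1 x hcx
  have hh : p.ht (f x) = p.ht y := by rw [coneIso_ht htr hiso hcx, hxy]
  exact eq_of_cmp_ht htr h1.2 hh

theorem coneIso_branch (htr : ∀ x y z : Ordinal.{u}, p.lt x y → p.lt y z → p.lt x z)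
    {f : Ordinal.{u} → Ordinal.{u}} {x y : Ordinal.{u}}
    (hiso : p.IsConeIso f x y) {B : Set Ordinal.{u}} (hB : IsBranch p B)
    (hBc : ∀ b ∈ B, p.cone x b) :
    IsBranch p (f '' B) ∧ (∀ b' ∈ f '' B, p.cone y b') := by
  obtain ⟨h1, h2, h3, h4⟩ := hiso
  have hmem : ∀ b' ∈ f '' B, p.cone y b' := by
    rintro b' ⟨b, hb, rfl⟩
    exact h1 b (hBc b hb)
  refine ⟨⟨?_, ?_, ?_, ?_⟩, hmem⟩
  · intro b' hb'
    exact (hmem b' hb').1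
  · rintro a' ⟨a, ha, rfl⟩ b' ⟨b, hb, rfl⟩
    rcases hB.2.1 a ha b hb with h | h | h
    · exact Or.inl ((h4 a b (hBc a ha) (hBc b hb)).1 h)
    · exact Or.inr (Or.inl (congrArg f h))
    · exact Or.inr (Or.inr ((h4 b a (hBc b hb) (hBc a ha)).1 h))
  · rintro s b' ⟨b, hb, rfl⟩ hsb
    have hcs : p.cone y s := cone_of_lt htr (hmem (f b) ⟨b, hb, rfl⟩) hsb
    obtain ⟨u, hu, rfl⟩ := h2 s hcs
    have : p.lt u b := (h4 u b hu (hBc b hb)).2 hsb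
    exact ⟨u, hB.2.2.1 u b hb this, rfl⟩
  · intro β hβ
    obtain ⟨b, hb, hhb⟩ := hB.2.2.2 β hβ
    refine ⟨f b, ⟨b, hb, rfl⟩, ?_⟩
    rw [coneIso_ht htr ⟨h1, h2, h3, h4⟩ (hBc b hb), hhb]

instance subrelSetIsWO {β : Type*} (r : β → β → Prop) [IsWellOrder β r] (s : Set β) :
    IsWellOrder (Subtype s) (Subrel r s) :=
  (Subrel.relEmbedding r s).isWellOrder

theorem type_eq_of_iso_Iio {σ : Type (u+1)} {r : σ → σ → Prop} [IsWellOrder σ r]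
    {o : Ordinal.{u+1}}
    (e : r ≃r Subrel ((· < ·) : Ordinal.{u+1} → Ordinal.{u+1} → Prop) (Set.Iio o)) :
    Ordinal.type r = o := by
  have h1 : Ordinal.type (Subrel ((· < ·) : Ordinal.{u+1} → Ordinal.{u+1} → Prop) (Set.Iio o))
      = Ordinal.lift.{u+2} o := by
    exact (Ordinal.type_subrel ((· < ·) : Ordinal.{u+1} → Ordinal.{u+1} → Prop) o).trans
      (Ordinal.typein_ordinal o)
  have h2 := Ordinal.lift_type_eq.{u+1, u+2, u+2}.2 ⟨e⟩
  rw [h1, Ordinal.lift_lift] at h2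
  exact Ordinal.lift_inj.1 h2

theorem branch_relIso (htr : ∀ x y z : Ordinal.{u}, p.lt x y → p.lt y z → p.lt x z)
    (hlt : ∀ t ∈ p.tp, p.ht t < p.alphap)
    {B : Set Ordinal.{u}} (hB : IsBranch p B) :
    ∃ e : Subrel p.lt B ≃r Subrel ((· < ·) : Ordinal.{u+1} → Ordinal.{u+1} → Prop)
      (Set.Iio p.alphap), ∀ b, (e b).1 = p.ht b.1 := by
  have F : ∀ b : ↥B, p.ht b.1 ∈ Set.Iio p.alphap := fun b => hlt _ (hB.1 b.2)
  have hbij : Function.Bijective (fun b : ↥B => (⟨p.ht b.1, F b⟩ : ↥(Set.Iio p.alphap))) := by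
    constructor
    · intro a b hab
      have : p.ht a.1 = p.ht b.1 := congrArg Subtype.val hab
      exact Subtype.ext (eq_of_cmp_ht htr (hB.2.1 a.1 a.2 b.1 b.2) this)
    · rintro ⟨β, hβ⟩
      obtain ⟨b, hb, hhb⟩ := hB.2.2.2 β hβ
      exact ⟨⟨b, hb⟩, Subtype.ext hhb⟩
  have hrel : ∀ a b : ↥B, (p.ht a.1 < p.ht b.1 ↔ p.lt a.1 b.1) := by
    intro a b
    constructor
    · intro h
      rcases hB.2.1 a.1 a.2 b.1 b.2 with h' | h' | h'
      · exact h'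
      · exact absurd (h' ▸ h) (lt_irrefl _)
      · exact absurd (ht_lt_ht htr h') (not_lt.2 (le_of_lt h))
    · exact ht_lt_ht htr
  exact ⟨RelIso.mk (Equiv.ofBijective _ hbij) (hrel _ _), fun b => rfl⟩

end QTall

/-- For every ordinal `α < ω₁`, the set of conditions `q ∈ Q` whose tree has
height `α_q > α` is dense in `Q`. -/
theorem Q_tall_conditions_dense (α : Ordinal.{u + 1})
    (hα : α < (Cardinal.aleph 1).ord) (p : QPre.{u}) (hp : IsQCond p) :
    ∃ q : QPre.{u}, IsQCond q ∧ QLe q p ∧ α < q.alphap := by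
  classical
  open QTall Ordinal Set in
  by_cases hcase : α < p.alphap
  · refine ⟨p, hp, ⟨?_, fun _ _ _ _ => Iff.rfl, subset_rfl, fun _ _ _ _ => rfl⟩, hcase⟩
    ext t
    exact ⟨fun h => ⟨h, hp.2.2.2.2.1 t h⟩, fun h => h.1⟩
  push_neg at hcase
  obtain ⟨hp1, hp2, hp3, hp4, hp5, hp6, hp7, hp8, hp9⟩ := hp
  -- an upper bound for the old tree
  obtain ⟨γ, hγ1, hγ2⟩ : ∃ γ : Ordinal.{u}, γ < (Cardinal.aleph 1).ord ∧ ∀ t ∈ p.tp, t < γ := by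
    rcases p.tp.eq_empty_or_nonempty with he | hne
    · refine ⟨0, ?_, by simp [he]⟩
      rw [Cardinal.lt_ord]
      simpa using Cardinal.aleph_pos 1
    · obtain ⟨f, hf⟩ := hp2.exists_eq_range hne
      refine ⟨Ordinal.lsub f, ?_, ?_⟩
      · refine Cardinal.lsub_lt_ord_lift_of_isRegular Cardinal.isRegular_aleph_one
          (by simpa using Cardinal.aleph0_lt_aleph_one) ?_
        intro n
        apply hp1
        rw [hf]
        exact Set.mem_range_self n
      · intro t ht
        rw [hf] at ht
        obtain ⟨n, rfl⟩ := ht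
        exact Ordinal.lt_lsub f n
  have hsucc : α < α + 1 := by
    rw [Ordinal.add_one_eq_succ]; exact Order.lt_succ α
  have hap1 : p.alphap ≤ α + 1 := hcase.trans hsucc.le
  set ι := (α + 1) - p.alphap with hιdef
  have hιsum : p.alphap + ι = α + 1 := Ordinal.add_sub_cancel_of_le hap1
  have hι0 : 0 < ι := by
    rcases eq_zero_or_pos ι with h | h
    · rw [h, add_zero] at hιsum
      exact absurd (hιsum ▸ hcase) (not_le.2 hsucc)
    · exact h
  -- choose the isomorphism data
  choose X hX Y hY hXY hIso using fun ξ : ↥p.dp => hp9 ξ.1 ξ.2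
  set XX : ↥p.dp → ↥p.tp := fun ξ => ⟨X ξ, hX ξ⟩ with hXXdef
  -- choose branches
  choose Bt hBt htBt using fun t : ↥p.tp => exists_branch hp4 hp2 hp5 hp6 t.2
  -- the family of branches
  set I := Option (↥p.tp ⊕ ↥p.dp) with hIdef
  set Br : I → Set Ordinal.{u} := fun j =>
    j.elim (if h : p.tp.Nonempty then Bt ⟨h.choose, h.choose_spec⟩ else ∅)
      (Sum.elim (fun t => Bt t) (fun ξ => p.pi ξ.1 '' Bt (XX ξ))) with hBrdef
  have hconeX : ∀ ξ : ↥p.dp, ∀ b ∈ Bt (XX ξ), p.cone (X ξ) b := by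
    intro ξ b hb
    exact ⟨(hBt (XX ξ)).1 hb, (hBt (XX ξ)).2.1 b hb (X ξ) (htBt (XX ξ))⟩
  have hap0 : p.tp = ∅ → p.alphap = 0 := by
    intro h
    refine le_antisymm (csInf_le' ?_) zero_le
    intro t ht
    rw [h] at ht
    exact absurd ht (Set.notMem_empty t)
  have hBrIsB : ∀ j, QTall.IsBranch p (Br j) := by
    intro j
    match j with
    | none =>
      simp only [hBrdef, Option.elim]
      split
      · exact hBt _
      · next h =>
        have hemp : p.tp = ∅ := Set.not_nonempty_iff_eq_empty.1 h
        refine ⟨Set.empty_subset _, ?_, ?_, ?_⟩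
        · rintro a ha; exact absurd ha (Set.notMem_empty a)
        · rintro a b hb; exact absurd hb (Set.notMem_empty b)
        · intro β hβ
          rw [hap0 hemp] at hβ
          exact absurd hβ (not_lt_of_ge zero_le)
    | some (Sum.inl t) => exact hBt t
    | some (Sum.inr ξ) =>
      exact (coneIso_branch hp4 (hIso ξ) (hBt (XX ξ)) (hconeX ξ)).1
  -- positions
  have hPcnt : (Set.Iio ι).Countable := by
    have hcard : ι.card ≤ Cardinal.aleph0 := by
      have h1 : ι ≤ α + 1 := Ordinal.sub_le_self _ _
      have h2 : α + 1 < (Cardinal.aleph 1).ord := by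
        rw [Ordinal.add_one_eq_succ]
        exact (Cardinal.isSuccLimit_ord (Cardinal.aleph0_le_aleph 1)).succ_lt hα
      have h3 := Cardinal.lt_ord.1 (lt_of_le_of_lt h1 h2)
      rwa [← Cardinal.succ_aleph0, Order.lt_succ_iff] at h3
    rw [Cardinal.countable_iff_lt_aleph_one, Ordinal.mk_Iio_ordinal]
    calc Cardinal.lift.{u+2} ι.card ≤ Cardinal.lift.{u+2} Cardinal.aleph0 :=
          Cardinal.lift_le.2 hcard
      _ = Cardinal.aleph0 := Cardinal.lift_aleph0
      _ < Cardinal.aleph 1 := Cardinal.aleph0_lt_aleph_one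
  haveI hPc : Countable ↥(Set.Iio ι) := hPcnt.to_subtype
  haveI : Countable ↥p.tp := hp2.to_subtype
  haveI : Countable ↥p.dp := hp8.to_subtype
  set T := (I × ↥(Set.Iio ι)) with hTdef
  haveI : Countable T := by
    have h1 : Countable I := inferInstanceAs (Countable (Option (↥p.tp ⊕ ↥p.dp)))
    exact inferInstanceAs (Countable (I × ↥(Set.Iio ι)))
  obtain ⟨E, hE⟩ : ∃ E : T → ℕ, Function.Injective E :=
    (countable_iff_exists_injective T).1 inferInstance
  set code : T → Ordinal.{u} := fun z => γ + (E z : ℕ) with hcodedef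
  have hcode_inj : Function.Injective code := by
    intro a b hab
    apply hE
    have h1 : ((E a : ℕ) : Ordinal.{u}) = ((E b : ℕ) : Ordinal.{u}) :=
      (add_right_inj γ).1 hab
    exact_mod_cast h1
  have hcode_tp : ∀ z : T, code z ∉ p.tp := by
    intro z hz
    have h1 : γ ≤ code z := le_self_add
    exact absurd (hγ2 _ hz) (not_lt.2 h1)
  have hcode_lt : ∀ z : T, code z < (Cardinal.aleph 1).ord := by
    intro z
    rw [Cardinal.lt_ord, Ordinal.card_add]
    refine Cardinal.add_lt_of_lt (Cardinal.aleph0_le_aleph 1) (Cardinal.lt_ord.1 hγ1) ?_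
    exact lt_trans (by rw [Ordinal.card_nat]; exact Cardinal.nat_lt_aleph0 _)
      Cardinal.aleph0_lt_aleph_one
  -- the new order
  set qlt : Ordinal.{u} → Ordinal.{u} → Prop := fun a b =>
    p.lt a b ∨ (∃ z : T, b = code z ∧ a ∈ Br z.1) ∨
    (∃ z w : T, a = code z ∧ b = code w ∧ z.1 = w.1 ∧ z.2.1 < w.2.1) with hqltdef
  have hqlt_old : ∀ a b, b ∈ p.tp → (qlt a b ↔ p.lt a b) := by
    intro a b hb
    constructor
    · rintro (h | ⟨z, rfl, _⟩ | ⟨z, w, _, rfl, _⟩)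
      · exact h
      · exact absurd hb (hcode_tp z)
      · exact absurd hb (hcode_tp w)
    · exact Or.inl
  have hqlt_code : ∀ a (w : T), qlt a (code w) ↔
      (a ∈ Br w.1 ∨ ∃ i : ↥(Set.Iio ι), a = code (w.1, i) ∧ i.1 < w.2.1) := by
    intro a w
    constructor
    · rintro (h | ⟨z, hz, ha⟩ | ⟨z, w', rfl, hw', hzw, hlt'⟩)
      · exact absurd (p.lt_mem _ _ h).2 (hcode_tp w)
      · rw [hcode_inj hz]
        exact Or.inl ha
      · have := hcode_inj hw'
        subst this
        exact Or.inr ⟨z.2, congrArg code (Prod.ext hzw rfl), hlt'⟩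
    · rintro (h | ⟨i, rfl, hi⟩)
      · exact Or.inr (Or.inl ⟨w, rfl, h⟩)
      · exact Or.inr (Or.inr ⟨(w.1, i), w, rfl, rfl, rfl, hi⟩)
  have hqlt_not_code_old : ∀ (z : T) b, b ∈ p.tp → ¬ qlt (code z) b := by
    rintro z b hb h
    rw [hqlt_old _ _ hb] at h
    exact absurd (p.lt_mem _ _ h).1 (hcode_tp z)
  have hqlt_code_code : ∀ z w : T, qlt (code z) (code w) ↔ (z.1 = w.1 ∧ z.2.1 < w.2.1) := by
    intro z w
    rw [hqlt_code]
    constructor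
    · rintro (h | ⟨i, he, hi⟩)
      · exact absurd ((hBrIsB w.1).1 h) (hcode_tp z)
      · have := hcode_inj he
        rw [this]
        exact ⟨rfl, hi⟩
    · rintro ⟨h1, h2⟩
      exact Or.inr ⟨z.2, congrArg code (Prod.ext h1 rfl), h2⟩
  have hqlt_mem : ∀ a b, qlt a b → a ∈ p.tp ∪ Set.range code ∧ b ∈ p.tp ∪ Set.range code := by
    rintro a b (h | ⟨z, rfl, ha⟩ | ⟨z, w, rfl, rfl, _⟩)
    · exact ⟨Or.inl (p.lt_mem _ _ h).1, Or.inl (p.lt_mem _ _ h).2⟩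
    · exact ⟨Or.inl ((hBrIsB z.1).1 ha), Or.inr ⟨z, rfl⟩⟩
    · exact ⟨Or.inr ⟨z, rfl⟩, Or.inr ⟨w, rfl⟩⟩
  have hqlt_trans : ∀ x y z, qlt x y → qlt y z → qlt x z := by
    rintro a b c hab hbc
    rcases hbc with h | ⟨w, rfl, hb⟩ | ⟨w, v, rfl, rfl, hwv, hlt'⟩
    · exact Or.inl (hp4 _ _ _ ((hqlt_old _ _ (p.lt_mem _ _ h).1).1 hab) h)
    · -- c = code w, b ∈ Br w.1 ⊆ tp
      have hb' : b ∈ p.tp := (hBrIsB w.1).1 hb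
      have hab' : p.lt a b := (hqlt_old _ _ hb').1 hab
      exact Or.inr (Or.inl ⟨w, rfl, (hBrIsB w.1).2.2.1 a b hb hab'⟩)
    · -- b = code w, c = code v, same index
      rcases (hqlt_code a w).1 hab with h | ⟨i, rfl, hi⟩
      · exact Or.inr (Or.inl ⟨v, rfl, hwv ▸ h⟩)
      · exact Or.inr (Or.inr ⟨(w.1, i), v, rfl, rfl, hwv, lt_trans hi hlt'⟩)
  have hqlt_irrefl : ∀ x, ¬ qlt x x := by
    rintro x (h | ⟨z, rfl, hx⟩ | ⟨z, w, rfl, he, hzw, hlt'⟩)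
    · exact hp3 x (p.lt_mem _ _ h).1 h
    · exact hcode_tp z ((hBrIsB z.1).1 hx)
    · have := hcode_inj he
      subst this
      exact absurd hlt' (lt_irrefl _)
  -- the chain part above each branch
  set chainset : T → Set Ordinal.{u} := fun w =>
    {a | ∃ i : ↥(Set.Iio ι), a = code (w.1, i) ∧ i.1 < w.2.1} with hchaindef
  have eC : ∀ w : T, Subrel ((· < ·) : Ordinal.{u+1} → Ordinal.{u+1} → Prop)
      (Set.Iio (w.2.1 : Ordinal.{u+1})) ≃r Subrel qlt (chainset w) := by
    intro w
    set GG : ↥(Set.Iio (w.2.1 : Ordinal.{u+1})) → ↥(Set.Iio ι) :=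
      fun o => ⟨o.1, Set.mem_Iio.2 (lt_trans (Set.mem_Iio.1 o.2) (Set.mem_Iio.1 w.2.2))⟩
      with hGGdef
    have G : ∀ o : ↥(Set.Iio (w.2.1 : Ordinal.{u+1})), code (w.1, GG o)
        ∈ chainset w := fun o => ⟨GG o, rfl, Set.mem_Iio.1 o.2⟩
    have hbij : Function.Bijective (fun o : ↥(Set.Iio (w.2.1 : Ordinal.{u+1})) =>
        (⟨code (w.1, GG o), G o⟩ : ↥(chainset w))) := by
      constructor
      · intro a b hab
        have h1 := hcode_inj (congrArg Subtype.val hab)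
        exact Subtype.ext (congrArg (fun z : T => z.2.1) h1)
      · rintro ⟨a, ⟨i, rfl, hi⟩⟩
        exact ⟨⟨i.1, hi⟩, Subtype.ext (congrArg code (congrArg (Prod.mk w.1) (Subtype.ext rfl)))⟩
    refine RelIso.mk (Equiv.ofBijective _ hbij) ?_
    intro a b
    show qlt (code (w.1, GG a)) (code (w.1, GG b)) ↔ a.1 < b.1
    rw [hqlt_code_code]
    simp [hGGdef]
    exact Iff.rfl
  choose eB heB using fun j : I => QTall.branch_relIso hp4 hp5 (hBrIsB j)
  -- the predecessors of a new node
  have predIso : ∀ w : T, Sum.Lex (Subrel p.lt (Br w.1)) (Subrel qlt (chainset w)) ≃r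
      (fun a b : {s : Ordinal.{u} // qlt s (code w)} => qlt a.1 b.1) := by
    intro w
    set F : ↥(Br w.1) ⊕ ↥(chainset w) → {s : Ordinal.{u} // qlt s (code w)} :=
      fun x => Sum.rec (fun b => ⟨b.1, (hqlt_code b.1 w).2 (Or.inl b.2)⟩)
        (fun c => ⟨c.1, (hqlt_code c.1 w).2 (Or.inr c.2)⟩) x with hFdef
    have hFval : ∀ x, (F x).1 = Sum.elim Subtype.val Subtype.val x := by
      rintro (b | c) <;> rfl
    have hbij : Function.Bijective F := by
      constructor
      · rintro (b | c) (b' | c') he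
        · have h1 : b.1 = b'.1 :=
            congrArg (Subtype.val : {s : Ordinal.{u} // qlt s (code w)} → Ordinal.{u}) he
          exact congrArg Sum.inl (Subtype.ext h1)
        · exfalso
          obtain ⟨i, hi, _⟩ := c'.2
          have : b.1 = c'.1 :=
            congrArg (Subtype.val : {s : Ordinal.{u} // qlt s (code w)} → Ordinal.{u}) he
          exact hcode_tp (w.1, i) (hi ▸ this ▸ (hBrIsB w.1).1 b.2)
        · exfalso
          obtain ⟨i, hi, _⟩ := c.2
          have : c.1 = b'.1 :=
            congrArg (Subtype.val : {s : Ordinal.{u} // qlt s (code w)} → Ordinal.{u}) he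
          exact hcode_tp (w.1, i) (hi ▸ this.symm ▸ (hBrIsB w.1).1 b'.2)
        · have h1 : c.1 = c'.1 :=
            congrArg (Subtype.val : {s : Ordinal.{u} // qlt s (code w)} → Ordinal.{u}) he
          exact congrArg Sum.inr (Subtype.ext h1)
      · rintro ⟨s, hs⟩
        rcases (hqlt_code s w).1 hs with h | h
        · exact ⟨Sum.inl ⟨s, h⟩, rfl⟩
        · exact ⟨Sum.inr ⟨s, h⟩, rfl⟩
    refine RelIso.mk (Equiv.ofBijective F hbij) ?_
    rintro (b | c) (b' | c')
    · show qlt b.1 b'.1 ↔ Sum.Lex _ _ (Sum.inl b) (Sum.inl b')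
      rw [Sum.lex_inl_inl]
      exact hqlt_old b.1 b'.1 ((hBrIsB w.1).1 b'.2)
    · show qlt b.1 c'.1 ↔ Sum.Lex _ _ (Sum.inl b) (Sum.inr c')
      obtain ⟨i, hi, hilt⟩ := c'.2
      refine iff_of_true ?_ (Sum.Lex.sep _ _)
      rw [hi]
      exact Or.inr (Or.inl ⟨(w.1, i), rfl, b.2⟩)
    · show qlt c.1 b'.1 ↔ Sum.Lex _ _ (Sum.inr c) (Sum.inl b')
      obtain ⟨i, hi, hilt⟩ := c.2
      refine iff_of_false ?_ (by simp [Sum.lex_inr_inl])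
      rw [hi]
      exact hqlt_not_code_old (w.1, i) b'.1 ((hBrIsB w.1).1 b'.2)
    · show qlt c.1 c'.1 ↔ Sum.Lex _ _ (Sum.inr c) (Sum.inr c')
      rw [Sum.lex_inr_inr]
      exact Iff.rfl
  -- the new tree order is well-founded everywhere
  have hwo : ∀ t, IsWellOrder {s : Ordinal.{u} // qlt s t} (fun a b => qlt a.1 b.1) := by
    intro t
    by_cases hc : ∃ w : T, t = code w
    · obtain ⟨w, rfl⟩ := hc
      letI i1 : IsWellOrder (Subtype (Br w.1)) (Subrel p.lt (Br w.1)) :=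
        (eB w.1).toRelEmbedding.isWellOrder
      letI i2 : IsWellOrder (Subtype (chainset w)) (Subrel qlt (chainset w)) :=
        (eC w).symm.toRelEmbedding.isWellOrder
      exact (predIso w).symm.toRelEmbedding.isWellOrder
    · by_cases htp : t ∈ p.tp
      · letI := p.wo t
        have e : (fun a b : {s : Ordinal.{u} // qlt s t} => qlt a.1 b.1) ≃r
            (fun a b : {s : Ordinal.{u} // p.lt s t} => p.lt a.1 b.1) := by
          refine RelIso.mk (Equiv.subtypeEquivRight (fun s => hqlt_old s t htp)) ?_
          intro a b
          show p.lt a.1 b.1 ↔ qlt a.1 b.1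
          have hb : b.1 ∈ p.tp := (p.lt_mem _ _ ((hqlt_old b.1 t htp).1 b.2)).1
          exact (hqlt_old a.1 b.1 hb).symm
        exact e.toRelEmbedding.isWellOrder
      · haveI : IsEmpty {s : Ordinal.{u} // qlt s t} := by
          refine ⟨fun s => ?_⟩
          rcases s.2 with h | ⟨z, rfl, _⟩ | ⟨z, z', _, rfl, _⟩
          · exact htp (p.lt_mem _ _ h).2
          · exact hc ⟨z, rfl⟩
          · exact hc ⟨z', rfl⟩
        exact { toTrichotomous := ⟨fun a => isEmptyElim a⟩,
                toIsWellFounded := ⟨⟨fun a => isEmptyElim a⟩⟩ }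
  -- the new isomorphisms
  set qpi : Ordinal.{u} → Ordinal.{u} → Ordinal.{u} := fun ξ u =>
    if hξ : ξ ∈ p.dp then
      (if hz : ∃ i : ↥(Set.Iio ι), u = code (some (Sum.inl (XX ⟨ξ, hξ⟩)), i) then
        code (some (Sum.inr ⟨ξ, hξ⟩), hz.choose) else p.pi ξ u)
    else p.pi ξ u with hqpidef
  have hqpi_old : ∀ ξ, ∀ t ∈ p.tp, qpi ξ t = p.pi ξ t := by
    intro ξ t ht
    simp only [hqpidef]
    by_cases hξ : ξ ∈ p.dp
    · rw [dif_pos hξ, dif_neg]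
      rintro ⟨i, hi⟩
      exact hcode_tp _ (hi ▸ ht)
    · rw [dif_neg hξ]
  have hqpi_code : ∀ (ξ' : ↥p.dp) (i : ↥(Set.Iio ι)),
      qpi ξ'.1 (code (some (Sum.inl (XX ξ')), i)) = code (some (Sum.inr ξ'), i) := by
    rintro ⟨ξ, hξ⟩ i
    simp only [hqpidef]
    have hz : ∃ i' : ↥(Set.Iio ι),
        code (some (Sum.inl (XX ⟨ξ, hξ⟩)), i) = code (some (Sum.inl (XX ⟨ξ, hξ⟩)), i') :=
      ⟨i, rfl⟩
    rw [dif_pos hξ, dif_pos hz]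
    have := hcode_inj hz.choose_spec
    have h2 : i = hz.choose := congrArg (fun z : T => z.2) this
    rw [← h2]
  -- assemble the new condition
  set q : QPre.{u} := ⟨p.tp ∪ Set.range code, qlt, p.dp, qpi, hqlt_mem, hwo⟩ with hqdef
  have hqht_old : ∀ t ∈ p.tp, q.ht t = p.ht t := by
    intro t ht
    letI := hwo t
    letI := p.wo t
    refine Ordinal.type_eq.2 ⟨RelIso.mk (Equiv.subtypeEquivRight (fun s => hqlt_old s t ht)) ?_⟩
    intro a b
    show p.lt a.1 b.1 ↔ qlt a.1 b.1
    have hb : b.1 ∈ p.tp := (p.lt_mem _ _ ((hqlt_old b.1 t ht).1 b.2)).1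
    exact (hqlt_old a.1 b.1 hb).symm
  have hqht_code : ∀ w : T, q.ht (code w) = p.alphap + w.2.1 := by
    intro w
    letI i1 : IsWellOrder (Subtype (Br w.1)) (Subrel p.lt (Br w.1)) :=
      (eB w.1).toRelEmbedding.isWellOrder
    letI i2 : IsWellOrder (Subtype (chainset w)) (Subrel qlt (chainset w)) :=
      (eC w).symm.toRelEmbedding.isWellOrder
    have h1 : Ordinal.type (Subrel p.lt (Br w.1)) = p.alphap :=
      QTall.type_eq_of_iso_Iio (eB w.1)
    have h2 : Ordinal.type (Subrel qlt (chainset w)) = w.2.1 :=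
      QTall.type_eq_of_iso_Iio (eC w).symm
    have h3 : q.ht (code w) = Ordinal.type (Sum.Lex (Subrel p.lt (Br w.1))
        (Subrel qlt (chainset w))) := Ordinal.type_eq.2 ⟨(predIso w).symm⟩
    rw [h3, Ordinal.type_sum_lex, h1, h2]
  -- the height of the new tree
  have hq_alphap : q.alphap = α + 1 := by
    have hmem : (α + 1) ∈ {β | ∀ t ∈ q.tp, q.ht t ≠ β} := by
      rintro t (ht | ⟨z, rfl⟩) he
      · rw [hqht_old t ht] at he
        exact absurd (he ▸ hp5 t ht) (not_lt.2 hap1)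
      · rw [hqht_code z] at he
        have : (z.2.1 : Ordinal.{u+1}) < ι := z.2.2
        have h2 : p.alphap + z.2.1 < p.alphap + ι := by
          exact (add_lt_add_iff_left p.alphap).2 this
        rw [hιsum] at h2
        exact absurd he (ne_of_lt h2)
    refine le_antisymm (csInf_le' hmem) (le_csInf ⟨_, hmem⟩ ?_)
    intro β hβ
    by_contra hcon
    push_neg at hcon
    rcases lt_or_ge β p.alphap with h | h
    · obtain ⟨t, ht, he⟩ := QTall.exists_ht_eq_of_lt_alphap h
      exact hβ t (Or.inl ht) ((hqht_old t ht).trans he)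
    · have h1 : p.alphap + (β - p.alphap) = β := Ordinal.add_sub_cancel_of_le h
      have h2 : β - p.alphap < ι := by
        have := h1 ▸ hcon
        exact (add_lt_add_iff_left p.alphap).1 (by rw [h1, hιsum]; exact hcon)
      refine hβ (code (none, ⟨β - p.alphap, Set.mem_Iio.2 h2⟩)) (Or.inr ⟨_, rfl⟩) ?_
      rw [hqht_code]
      exact h1
  -- cone characterization for new nodes
  have hcone_code : ∀ (w : T) u, q.cone (code w) u ↔
      (u ∈ Br w.1 ∨ ∃ i : ↥(Set.Iio ι), u = code (w.1, i)) := by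
    intro w u
    constructor
    · rintro ⟨hu, hcmp | hcmp | hcmp⟩
      · rcases (hqlt_code u w).1 hcmp with h | ⟨i, hi, _⟩
        · exact Or.inl h
        · exact Or.inr ⟨i, hi⟩
      · exact Or.inr ⟨w.2, hcmp.trans (congrArg code rfl)⟩
      · rcases hcmp with h | ⟨z, rfl, hmem⟩ | ⟨z, z', hwz, rfl, hidx, hpos⟩
        · exact absurd (p.lt_mem _ _ h).1 (hcode_tp w)
        · exact absurd ((hBrIsB z.1).1 hmem) (hcode_tp w)
        · have hzw : w = z := hcode_inj hwz
          subst hzw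
          exact Or.inr ⟨z'.2, congrArg code (Prod.ext hidx.symm rfl)⟩
    · rintro (h | ⟨i, rfl⟩)
      · exact ⟨Or.inl ((hBrIsB w.1).1 h), Or.inl (Or.inr (Or.inl ⟨w, rfl, h⟩))⟩
      · refine ⟨Or.inr ⟨_, rfl⟩, ?_⟩
        rcases lt_trichotomy (i.1 : Ordinal.{u+1}) w.2.1 with h | h | h
        · exact Or.inl ((hqlt_code_code (w.1, i) w).2 ⟨rfl, h⟩)
        · exact Or.inr (Or.inl (congrArg code (Prod.ext rfl (Subtype.ext h))))
        · exact Or.inr (Or.inr ((hqlt_code_code w (w.1, i)).2 ⟨rfl, h⟩))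
  -- the cone isomorphisms of q
  have hq_iso : ∀ ξ ∈ p.dp, ∃ x ∈ q.tp, ∃ y ∈ q.tp, q.ht x = q.ht y ∧
      q.IsConeIso (q.pi ξ) x y := by
    intro ξ hξ
    set ξ' : ↥p.dp := ⟨ξ, hξ⟩ with hξ'def
    set i0 : ↥(Set.Iio ι) := ⟨0, Set.mem_Iio.2 hι0⟩ with hi0def
    set wX : T := (some (Sum.inl (XX ξ')), i0) with hwXdef
    set wY : T := (some (Sum.inr ξ'), i0) with hwYdef
    have hBX : Br wX.1 = Bt (XX ξ') := rfl
    have hBY : Br wY.1 = p.pi ξ '' Bt (XX ξ') := rfl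
    have hBXtp : Br wX.1 ⊆ p.tp := (hBrIsB wX.1).1
    have hBYtp : Br wY.1 ⊆ p.tp := (hBrIsB wY.1).1
    have hfold : ∀ u ∈ Br wX.1, q.pi ξ u = p.pi ξ u ∧ p.pi ξ u ∈ Br wY.1 := by
      intro u hu
      exact ⟨hqpi_old ξ u (hBXtp hu), ⟨u, hu, rfl⟩⟩
    have hfcode : ∀ i : ↥(Set.Iio ι), q.pi ξ (code (wX.1, i)) = code (wY.1, i) := by
      intro i
      exact hqpi_code ξ' i
    obtain ⟨pi1, pi2, pi3, pi4⟩ := hIso ξ'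
    have hconeB : ∀ b ∈ Br wX.1, p.cone (X ξ') b := fun b hb => hconeX ξ' b hb
    refine ⟨code wX, Or.inr ⟨wX, rfl⟩, code wY, Or.inr ⟨wY, rfl⟩, ?_, ?_, ?_, ?_, ?_⟩
    · rw [hqht_code wX, hqht_code wY]
    · -- maps cone to cone
      intro t hct
      rcases (hcone_code wX t).1 hct with h | ⟨i, rfl⟩
      · refine (hcone_code wY _).2 (Or.inl ?_)
        rw [(hfold t h).1]
        exact (hfold t h).2
      · refine (hcone_code wY _).2 (Or.inr ⟨i, ?_⟩)
        exact hfcode i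
    · -- surjective
      intro s hcs
      rcases (hcone_code wY s).1 hcs with h | ⟨i, rfl⟩
      · obtain ⟨b, hb, rfl⟩ := h
        refine ⟨b, (hcone_code wX b).2 (Or.inl hb), (hfold b hb).1⟩
      · exact ⟨code (wX.1, i), (hcone_code wX _).2 (Or.inr ⟨i, rfl⟩), hfcode i⟩
    · -- injective
      intro s t hcs hct he
      rcases (hcone_code wX s).1 hcs with hs | ⟨i, rfl⟩ <;>
        rcases (hcone_code wX t).1 hct with ht | ⟨i', rfl⟩
      · rw [(hfold s hs).1, (hfold t ht).1] at he
        exact pi3 s t (hconeB s hs) (hconeB t ht) he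
      · rw [(hfold s hs).1, hfcode i'] at he
        exact absurd (he ▸ hBYtp (hfold s hs).2) (hcode_tp (wY.1, i'))
      · rw [(hfold t ht).1, hfcode i] at he
        exact absurd (he ▸ hBYtp (hfold t ht).2) (hcode_tp (wY.1, i))
      · rw [hfcode i, hfcode i'] at he
        have h2 : (wY.1, i) = ((wY.1, i') : T) := hcode_inj he
        have h3 : i = i' := congrArg (fun z : T => z.2) h2
        exact congrArg code (Prod.ext rfl h3)
    · -- order preserving
      intro s t hcs hct
      rcases (hcone_code wX s).1 hcs with hs | ⟨i, rfl⟩ <;>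
        rcases (hcone_code wX t).1 hct with ht | ⟨i', rfl⟩
      · rw [(hfold s hs).1, (hfold t ht).1]
        show qlt s t ↔ qlt (p.pi ξ s) (p.pi ξ t)
        rw [hqlt_old s t (hBXtp ht), hqlt_old _ _ (hBYtp (hfold t ht).2)]
        exact pi4 s t (hconeB s hs) (hconeB t ht)
      · rw [(hfold s hs).1, hfcode i']
        show qlt s (code (wX.1, i')) ↔ qlt (p.pi ξ s) (code (wY.1, i'))
        refine iff_of_true ?_ ?_
        · exact (hqlt_code s (wX.1, i')).2 (Or.inl hs)
        · exact (hqlt_code _ (wY.1, i')).2 (Or.inl (hfold s hs).2)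
      · rw [(hfold t ht).1, hfcode i]
        show qlt (code (wX.1, i)) t ↔ qlt (code (wY.1, i)) (p.pi ξ t)
        refine iff_of_false ?_ ?_
        · exact hqlt_not_code_old (wX.1, i) t (hBXtp ht)
        · exact hqlt_not_code_old (wY.1, i) _ (hBYtp (hfold t ht).2)
      · rw [hfcode i, hfcode i']
        show qlt (code (wX.1, i)) (code (wX.1, i')) ↔
          qlt (code (wY.1, i)) (code (wY.1, i'))
        rw [hqlt_code_code, hqlt_code_code]
        simp
  -- assemble everything
  refine ⟨q, ⟨?_, ?_, ?_, ?_, ?_, ?_, hp7, hp8, hq_iso⟩, ⟨?_, ?_, subset_rfl, ?_⟩, ?_⟩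
  · rintro t (ht | ⟨z, rfl⟩)
    · exact hp1 ht
    · exact hcode_lt z
  · exact hp2.union (Set.countable_range code)
  · exact fun x _ => hqlt_irrefl x
  · exact hqlt_trans
  · intro t ht
    rw [hq_alphap]
    rcases ht with ht | ⟨z, rfl⟩
    · rw [hqht_old t ht]
      exact lt_of_lt_of_le (hp5 t ht) hap1
    · rw [hqht_code z]
      calc p.alphap + z.2.1 < p.alphap + ι := (add_lt_add_iff_left p.alphap).2 z.2.2
        _ = α + 1 := hιsum
  · -- normality
    intro t ht β hβ
    rw [hq_alphap] at hβ
    rcases lt_or_ge β p.alphap with hblo | hbhi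
    · -- old levels
      rcases ht with ht | ⟨z, rfl⟩
      · obtain ⟨s, hs, he, hcmp⟩ := hp6 t ht β hblo
        refine ⟨s, Or.inl hs, (hqht_old s hs).trans he, ?_⟩
        rcases hcmp with h | h | h
        · exact Or.inl (Or.inl h)
        · exact Or.inr (Or.inl h)
        · exact Or.inr (Or.inr (Or.inl h))
      · obtain ⟨b, hb, he⟩ := (hBrIsB z.1).2.2.2 β hblo
        refine ⟨b, Or.inl ((hBrIsB z.1).1 hb), (hqht_old b ((hBrIsB z.1).1 hb)).trans he, ?_⟩
        exact Or.inl (Or.inr (Or.inl ⟨z, rfl, hb⟩))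
    · -- new levels
      have h1 : p.alphap + (β - p.alphap) = β := Ordinal.add_sub_cancel_of_le hbhi
      have h2 : β - p.alphap < ι :=
        (add_lt_add_iff_left p.alphap).1 (by rw [h1, hιsum]; exact hβ)
      set i0 : ↥(Set.Iio ι) := ⟨β - p.alphap, Set.mem_Iio.2 h2⟩ with hi0def
      rcases ht with ht | ⟨z, rfl⟩
      · set j : I := some (Sum.inl (⟨t, ht⟩ : ↥p.tp)) with hjdef
        refine ⟨code (j, i0), Or.inr ⟨(j, i0), rfl⟩, (hqht_code (j, i0)).trans h1, ?_⟩
        exact Or.inr (Or.inr (Or.inr (Or.inl ⟨(j, i0), rfl, htBt ⟨t, ht⟩⟩)))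
      · refine ⟨code (z.1, i0), Or.inr ⟨(z.1, i0), rfl⟩, (hqht_code (z.1, i0)).trans h1, ?_⟩
        rcases lt_trichotomy (i0.1 : Ordinal.{u+1}) z.2.1 with h | h | h
        · exact Or.inl ((hqlt_code_code (z.1, i0) z).2 ⟨rfl, h⟩)
        · exact Or.inr (Or.inl (congrArg code (Prod.ext rfl (Subtype.ext h))))
        · exact Or.inr (Or.inr ((hqlt_code_code z (z.1, i0)).2 ⟨rfl, h⟩))
  · -- end extension
    ext t
    constructor
    · intro ht
      exact ⟨Or.inl ht, (hqht_old t ht).symm ▸ hp5 t ht⟩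
    · rintro ⟨ht | ⟨z, rfl⟩, hlt'⟩
      · exact ht
      · rw [hqht_code z] at hlt'
        exact absurd hlt' (not_lt.2 (le_self_add))
  · -- order restriction
    intro x y hx hy
    exact ⟨Or.inl, (hqlt_old x y hy).1⟩
  · -- pi restriction
    intro ξ hξ t ht
    exact hqpi_old ξ t ht
  · rw [hq_alphap]
    exact hsucc
end

section
/- Let p ∈ Q and let ξ ≠ η be elements of D_p, with π^p_ξ : (T_p)_{x_ξ} → (T_p)_{y_ξ} and π^p_η : (T_p)_{x_η} → (T_p)_{y_η}. Let x ∈ T_p satisfy x_ξ ≤ x and x_η ≤ x. Then there exist a condition q ≤ p and an ordinal α with ht(x) < α < α_q such that for every y ∈ T_q of height α with x <_q y, one has π^q_ξ(y) ≠ π^q_η(y). -/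
universe u

def relIsoOfIff {P Q : Ordinal.{u} → Prop} {r r' : Ordinal.{u} → Ordinal.{u} → Prop}
    (hPQ : ∀ a, P a ↔ Q a) (hrr : ∀ a b, P a → P b → (r a b ↔ r' a b)) :
    (fun (u v : {a // P a}) => r u.1 v.1) ≃r (fun (u v : {a // Q a}) => r' u.1 v.1) :=
  ⟨Equiv.subtypeEquivRight hPQ, by
    rintro ⟨a, ha⟩ ⟨b, hb⟩
    exact (hrr a b ha hb).symm⟩

theorem predLinear (p : QPre.{u}) {t a b : Ordinal.{u}} (ha : p.lt a t) (hb : p.lt b t) :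
    p.lt a b ∨ a = b ∨ p.lt b a := by
  have := @trichotomous_of _ (fun u v : {s // p.lt s t} => p.lt u.1 v.1) (p.wo t).toTrichotomous ⟨a, ha⟩ ⟨b, hb⟩
  rcases this with h | h | h
  · exact Or.inl h
  · exact Or.inr (Or.inl (congrArg Subtype.val h))
  · exact Or.inr (Or.inr h)

section
variable (p : QPre.{u})

theorem ht_eq_typein (htr : ∀ a b c, p.lt a b → p.lt b c → p.lt a c)
    {a c : Ordinal.{u}} (h : p.lt a c) :
    p.ht a = @Ordinal.typein {s // p.lt s c} (fun u v => p.lt u.1 v.1) (p.wo c) ⟨a, h⟩ := by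
  letI := p.wo c
  letI := p.wo a
  rw [← Ordinal.type_subrel]
  refine Ordinal.type_eq.2 ⟨?_⟩
  refine ⟨⟨fun u => ⟨⟨u.1, htr _ _ _ u.2 h⟩, u.2⟩, fun v => ⟨v.1.1, v.2⟩, ?_, ?_⟩, ?_⟩
  · intro u; rfl
  · intro v; rfl
  · rintro ⟨u, hu⟩ ⟨v, hv⟩; exact Iff.rfl

theorem ht_lt_of_lt (htr : ∀ a b c, p.lt a b → p.lt b c → p.lt a c)
    {a c : Ordinal.{u}} (h : p.lt a c) : p.ht a < p.ht c := by
  rw [ht_eq_typein p htr h]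
  letI := p.wo c
  exact Ordinal.typein_lt_type _ _

theorem exists_ht_pred (htr : ∀ a b c, p.lt a b → p.lt b c → p.lt a c)
    {t : Ordinal.{u}} {β : Ordinal.{u+1}} (hβ : β < p.ht t) :
    ∃ s, p.lt s t ∧ p.ht s = β := by
  letI := p.wo t
  obtain ⟨⟨s, hs⟩, h⟩ := Ordinal.typein_surj (fun (u v : {s // p.lt s t}) => p.lt u.1 v.1) hβ
  exact ⟨s, hs, (ht_eq_typein p htr hs).trans h⟩

end

section
variable (p : QPre.{u})

/-- A cofinal downward-closed chain realizing every level of `p`. -/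
def IsBranch (b : Set Ordinal.{u}) : Prop :=
  b ⊆ p.tp ∧ (∀ s ∈ b, ∀ t ∈ b, p.lt s t ∨ s = t ∨ p.lt t s) ∧
    (∀ s ∈ b, ∀ r, p.lt r s → r ∈ b) ∧ (∀ β < p.alphap, ∃ s ∈ b, p.ht s = β)

theorem exists_ht_lt_alphap {β : Ordinal.{u+1}} (hβ : β < p.alphap) :
    ∃ t ∈ p.tp, p.ht t = β := by
  by_contra h
  push_neg at h
  exact absurd (csInf_le' (show β ∈ {α | ∀ t ∈ p.tp, p.ht t ≠ α} from h)) (not_le.2 hβ)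

theorem branch_wo (htr : ∀ a b c, p.lt a b → p.lt b c → p.lt a c)
    (hht : ∀ t ∈ p.tp, p.ht t < p.alphap)
    {b : Set Ordinal.{u}} (hb : IsBranch p b) :
    IsWellOrder {s // s ∈ b} (fun u v => p.lt u.1 v.1) := by
  refine @IsWellOrder.mk _ _ ⟨?_⟩ ⟨fun a' b' h1 h2 => (((?_ : ∀ u v : {s // s ∈ b}, p.lt u.1 v.1 ∨ u = v ∨ p.lt v.1 u.1) a' b').resolve_left h1).resolve_right h2⟩
  swap
  · rintro ⟨u, hu⟩ ⟨v, hv⟩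
    rcases hb.2.1 u hu v hv with h | h | h
    · exact Or.inl h
    · exact Or.inr (Or.inl (Subtype.ext h))
    · exact Or.inr (Or.inr h)
  · exact (Subrelation.wf (r := InvImage (· < ·) (fun u : {s // s ∈ b} => p.ht u.1))
      (q := fun u v => p.lt u.1 v.1) (fun {u v} h => ht_lt_of_lt p htr h)
      (InvImage.wf _ Ordinal.lt_wf))

theorem typein_branch (htr : ∀ a b c, p.lt a b → p.lt b c → p.lt a c)
    {b : Set Ordinal.{u}} (hb : IsBranch p b) {s : Ordinal.{u}} (hs : s ∈ b)
    (inst : IsWellOrder {s // s ∈ b} (fun u v => p.lt u.1 v.1)) :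
    @Ordinal.typein {s // s ∈ b} (fun u v => p.lt u.1 v.1) inst ⟨s, hs⟩ = p.ht s := by
  letI := inst
  letI := p.wo s
  rw [← Ordinal.type_subrel]
  refine Ordinal.type_eq.2 ⟨?_⟩
  refine ⟨⟨fun u => ⟨u.1.1, u.2⟩, fun v => ⟨⟨v.1, hb.2.2.1 s hs v.1 v.2⟩, v.2⟩, ?_, ?_⟩, ?_⟩
  · intro u; rfl
  · intro v; rfl
  · rintro ⟨⟨u, hu⟩, hu2⟩ ⟨⟨v, hv⟩, hv2⟩; exact Iff.rfl

theorem type_branch (htr : ∀ a b c, p.lt a b → p.lt b c → p.lt a c)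
    (hht : ∀ t ∈ p.tp, p.ht t < p.alphap)
    {b : Set Ordinal.{u}} (hb : IsBranch p b)
    (inst : IsWellOrder {s // s ∈ b} (fun u v => p.lt u.1 v.1)) :
    @Ordinal.type {s // s ∈ b} (fun u v => p.lt u.1 v.1) inst = p.alphap := by
  letI := inst
  set τ := @Ordinal.type {s // s ∈ b} (fun u v => p.lt u.1 v.1) inst with hτ
  rcases lt_trichotomy τ p.alphap with h | h | h
  · obtain ⟨s, hs, hhs⟩ := hb.2.2.2 τ h
    have := Ordinal.typein_lt_type (fun (u v : {s // s ∈ b}) => p.lt u.1 v.1) ⟨s, hs⟩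
    rw [typein_branch p htr hb hs inst, hhs] at this
    exact absurd this (lt_irrefl _)
  · exact h
  · obtain ⟨⟨s, hs⟩, h2⟩ := Ordinal.typein_surj (fun (u v : {s // s ∈ b}) => p.lt u.1 v.1) h
    rw [typein_branch p htr hb hs inst] at h2
    exact absurd (h2 ▸ hht s (hb.1 hs)) (lt_irrefl _)




theorem exists_branch (hp : IsQCond p) {t : Ordinal.{u}} (htmem : t ∈ p.tp) :
    ∃ b, IsBranch p b ∧ t ∈ b := by
  classical
  obtain ⟨h1, h2, h3, h4, h5, h6, h7, h8, h9⟩ := hp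
  -- countability of Iio alphap
  have hScount : (Set.Iio p.alphap).Countable := by
    have : ∀ β : ↥(Set.Iio p.alphap), ∃ u, u ∈ p.tp ∧ p.ht u = β.1 :=
      fun β => exists_ht_lt_alphap p β.2
    choose g hg1 hg2 using this
    have hginj : Function.Injective fun β : ↥(Set.Iio p.alphap) => (⟨g β, hg1 β⟩ : ↥p.tp) := by
      intro a b hab
      have : g a = g b := congrArg Subtype.val hab
      exact Subtype.ext (by rw [← hg2 a, ← hg2 b, this])
    haveI : Countable ↥p.tp := Set.countable_coe_iff.2 h2
    haveI : Countable ↥(Set.Iio p.alphap) := Function.Injective.countable hginj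
    exact Set.countable_coe_iff.1 this
  have h0lt : (0 : Ordinal.{u+1}) < p.alphap := (zero_le).trans_lt (h5 t htmem)
  obtain ⟨f, hf⟩ := hScount.exists_eq_range ⟨0, h0lt⟩
  have hfS : ∀ n, f n < p.alphap := by
    intro n
    have : f n ∈ Set.Iio p.alphap := hf ▸ Set.mem_range_self n
    exact this
  -- the recursive chain
  let step : ℕ → Ordinal.{u} → Ordinal.{u} := fun n sn =>
    if h : sn ∈ p.tp ∧ p.ht sn < f n then (h6 sn h.1 (f n) (hfS n)).choose else sn
  let s : ℕ → Ordinal.{u} := fun n => Nat.rec t (fun n sn => step n sn) n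
  have hs0 : s 0 = t := rfl
  have hssucc : ∀ n, s (n + 1) = step n (s n) := fun n => rfl
  have hmem : ∀ n, s n ∈ p.tp := by
    intro n
    induction n with
    | zero => exact htmem
    | succ n ih =>
      rw [hssucc n]
      simp only [step]
      split
      · next h => exact (h6 (s n) h.1 (f n) (hfS n)).choose_spec.1
      · exact ih
  have hstep : ∀ n, s n = s (n + 1) ∨ p.lt (s n) (s (n + 1)) := by
    intro n
    rw [hssucc n]
    simp only [step]
    split
    · next h =>
      obtain ⟨hu2, hu3⟩ := (h6 (s n) h.1 (f n) (hfS n)).choose_spec.2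
      rcases hu3 with hc | hc | hc
      · have hlt := ht_lt_of_lt p h4 hc
        rw [hu2] at hlt
        exact absurd hlt (not_lt.2 (le_of_lt h.2))
      · rw [hc] at hu2
        exact absurd hu2 (ne_of_lt h.2)
      · exact Or.inr hc
    · exact Or.inl rfl
  have hht1 : ∀ n, f n ≤ p.ht (s (n + 1)) := by
    intro n
    rw [hssucc n]
    simp only [step]
    split
    · next h => exact le_of_eq ((h6 (s n) h.1 (f n) (hfS n)).choose_spec.2.1).symm
    · next h =>
      push_neg at h
      exact h (hmem n)
  have hmono : ∀ m n, m ≤ n → s m = s n ∨ p.lt (s m) (s n) := by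
    intro m n hmn
    induction n with
    | zero => cases Nat.le_zero.1 hmn; exact Or.inl rfl
    | succ n ih =>
      rcases Nat.le_succ_iff.1 hmn with h | h
      · rcases ih h with h' | h' <;> rcases hstep n with h'' | h''
        · exact Or.inl (h'.trans h'')
        · exact Or.inr (h' ▸ h'')
        · exact Or.inr (h'' ▸ h')
        · exact Or.inr (h4 _ _ _ h' h'')
      · cases h; exact Or.inl rfl
  refine ⟨{r | ∃ n, r = s n ∨ p.lt r (s n)}, ⟨?_, ?_, ?_, ?_⟩, ⟨0, Or.inl rfl⟩⟩
  · rintro r ⟨n, h | h⟩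
    · exact h ▸ hmem n
    · exact (p.lt_mem _ _ h).1
  · have key : ∀ r n m, n ≤ m → (r = s n ∨ p.lt r (s n)) → (r = s m ∨ p.lt r (s m)) := by
      rintro r n m hnm (h | h)
      · subst h; exact hmono n m hnm
      · rcases hmono n m hnm with h' | h'
        · exact Or.inr (h' ▸ h)
        · exact Or.inr (h4 _ _ _ h h')
    rintro r ⟨n, hr⟩ r' ⟨m, hr'⟩
    rcases le_total n m with hnm | hnm
    · have hr2 := key r n m hnm hr
      rcases hr2 with h | h <;> rcases hr' with h' | h'
      · exact Or.inr (Or.inl (h.trans h'.symm))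
      · exact Or.inr (Or.inr (h ▸ h'))
      · exact Or.inl (h' ▸ h)
      · exact predLinear p h h'
    · have hr2 := key r' m n hnm hr'
      rcases hr with h | h <;> rcases hr2 with h' | h'
      · exact Or.inr (Or.inl (h.trans h'.symm))
      · exact Or.inr (Or.inr (h ▸ h'))
      · exact Or.inl (h' ▸ h)
      · exact predLinear p h h'
  · rintro r ⟨n, h | h⟩ r' hr'
    · exact ⟨n, Or.inr (h ▸ hr')⟩
    · exact ⟨n, Or.inr (h4 _ _ _ hr' h)⟩
  · intro β hβ
    have : β ∈ Set.range f := hf ▸ hβ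
    obtain ⟨n, rfl⟩ := this
    rcases eq_or_lt_of_le (hht1 n) with h | h
    · exact ⟨s (n + 1), ⟨n + 1, Or.inl rfl⟩, h.symm⟩
    · obtain ⟨r, hr1, hr2⟩ := exists_ht_pred p h4 h
      exact ⟨r, ⟨n + 1, Or.inr hr1⟩, hr2⟩


theorem cone_of_lt (h4 : ∀ a b c, p.lt a b → p.lt b c → p.lt a c)
    {w s t : Ordinal.{u}} (hst : p.lt s t) (hct : p.cone w t) : p.cone w s := by
  refine ⟨(p.lt_mem _ _ hst).1, ?_⟩
  rcases hct.2 with h | h | h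
  · exact Or.inl (h4 _ _ _ hst h)
  · exact Or.inl (h ▸ hst)
  · exact predLinear p hst h

theorem coneIso_ht (h4 : ∀ a b c, p.lt a b → p.lt b c → p.lt a c)
    {f : Ordinal.{u} → Ordinal.{u}} {w z : Ordinal.{u}} (hiso : p.IsConeIso f w z)
    {t : Ordinal.{u}} (hct : p.cone w t) : p.ht (f t) = p.ht t := by
  obtain ⟨hi1, hi2, hi3, hi4⟩ := hiso
  have hft : p.cone z (f t) := hi1 t hct
  have hbij : Function.Bijective
      (fun s : {s // p.lt s t} =>
        (⟨f s.1, (hi4 s.1 t (cone_of_lt p h4 s.2 hct) hct).1 s.2⟩ : {s // p.lt s (f t)})) := by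
    constructor
    · rintro ⟨a, ha⟩ ⟨b, hb⟩ hab
      have : f a = f b := congrArg Subtype.val hab
      exact Subtype.ext (hi3 a b (cone_of_lt p h4 ha hct) (cone_of_lt p h4 hb hct) this)
    · rintro ⟨u, hu⟩
      have hcu : p.cone z u := cone_of_lt p h4 hu hft
      obtain ⟨t', hct', hft'⟩ := hi2 u hcu
      have : p.lt t' t := (hi4 t' t hct' hct).2 (hft' ▸ hu)
      exact ⟨⟨t', this⟩, Subtype.ext hft'⟩
  letI := p.wo t
  letI := p.wo (f t)
  refine (Ordinal.type_eq.2 ⟨RelIso.mk (Equiv.ofBijective _ hbij) ?_⟩).symm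
  rintro ⟨a, ha⟩ ⟨b, hb⟩
  exact (hi4 a b (cone_of_lt p h4 ha hct) (cone_of_lt p h4 hb hct)).symm

theorem coneIso_apex (h4 : ∀ a b c, p.lt a b → p.lt b c → p.lt a c)
    {f : Ordinal.{u} → Ordinal.{u}} {w z : Ordinal.{u}} (hiso : p.IsConeIso f w z)
    (hht : p.ht w = p.ht z) (hw : w ∈ p.tp) : f w = z := by
  have hcw : p.cone w w := ⟨hw, Or.inr (Or.inl rfl)⟩
  have hfw : p.cone z (f w) := hiso.1 w hcw
  have hhfw : p.ht (f w) = p.ht z := (coneIso_ht p h4 hiso hcw).trans hht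
  rcases hfw.2 with h | h | h
  · exact absurd (hhfw ▸ ht_lt_of_lt p h4 h) (lt_irrefl _)
  · exact h
  · exact absurd (hhfw ▸ ht_lt_of_lt p h4 h) (lt_irrefl _)

theorem branch_cone {b : Set Ordinal.{u}} (hb : IsBranch p b) {w s : Ordinal.{u}}
    (hw : w ∈ b) (hs : s ∈ b) : p.cone w s := ⟨hb.1 hs, hb.2.1 s hs w hw⟩

theorem branch_image (h4 : ∀ a b c, p.lt a b → p.lt b c → p.lt a c)
    {f : Ordinal.{u} → Ordinal.{u}} {w z : Ordinal.{u}} (hiso : p.IsConeIso f w z)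
    (hht : p.ht w = p.ht z) {b : Set Ordinal.{u}} (hb : IsBranch p b) (hw : w ∈ b) :
    IsBranch p (f '' b) ∧ z ∈ f '' b := by
  obtain ⟨hi1, hi2, hi3, hi4⟩ := hiso
  have hcone : ∀ s ∈ b, p.cone w s := fun s hs => branch_cone p hb hw hs
  have himg : ∀ s ∈ b, p.cone z (f s) := fun s hs => hi1 s (hcone s hs)
  refine ⟨⟨?_, ?_, ?_, ?_⟩, w, hw, coneIso_apex p h4 ⟨hi1, hi2, hi3, hi4⟩ hht (hb.1 hw)⟩
  · rintro r ⟨s, hs, rfl⟩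
    exact (himg s hs).1
  · rintro r ⟨s, hs, rfl⟩ r' ⟨s', hs', rfl⟩
    rcases hb.2.1 s hs s' hs' with h | h | h
    · exact Or.inl ((hi4 s s' (hcone s hs) (hcone s' hs')).1 h)
    · exact Or.inr (Or.inl (congrArg f h))
    · exact Or.inr (Or.inr ((hi4 s' s (hcone s' hs') (hcone s hs)).1 h))
  · rintro r ⟨s, hs, rfl⟩ r' hr'
    have hcr' : p.cone z r' := cone_of_lt p h4 hr' (himg s hs)
    obtain ⟨t', hct', hft'⟩ := hi2 r' hcr'
    have : p.lt t' s := (hi4 t' s hct' (hcone s hs)).2 (hft' ▸ hr')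
    exact ⟨t', hb.2.2.1 s hs t' this, hft'⟩
  · intro β hβ
    obtain ⟨s, hs, hhs⟩ := hb.2.2.2 β hβ
    exact ⟨f s, ⟨s, hs, rfl⟩, (coneIso_ht p h4 ⟨hi1, hi2, hi3, hi4⟩ (hcone s hs)).trans hhs⟩

theorem branch_preimage (h4 : ∀ a b c, p.lt a b → p.lt b c → p.lt a c)
    {f : Ordinal.{u} → Ordinal.{u}} {w z : Ordinal.{u}} (hiso : p.IsConeIso f w z)
    (hht : p.ht w = p.ht z) {c : Set Ordinal.{u}} (hc : IsBranch p c) (hz : z ∈ c)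
    (hw : w ∈ p.tp) :
    IsBranch p {t | p.cone w t ∧ f t ∈ c} ∧ w ∈ {t | p.cone w t ∧ f t ∈ c} ∧
      f '' {t | p.cone w t ∧ f t ∈ c} = c := by
  obtain ⟨hi1, hi2, hi3, hi4⟩ := hiso
  have hfw : f w = z := coneIso_apex p h4 ⟨hi1, hi2, hi3, hi4⟩ hht hw
  have hsurj : ∀ s ∈ c, ∃ t, (p.cone w t ∧ f t ∈ c) ∧ f t = s := by
    intro s hs
    obtain ⟨t, hct, hft⟩ := hi2 s (branch_cone p hc hz hs)
    exact ⟨t, ⟨hct, hft ▸ hs⟩, hft⟩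
  refine ⟨⟨?_, ?_, ?_, ?_⟩, ⟨⟨hw, Or.inr (Or.inl rfl)⟩, hfw ▸ hz⟩, ?_⟩
  · rintro r ⟨hr, _⟩
    exact hr.1
  · rintro r ⟨hr, hfr⟩ r' ⟨hr', hfr'⟩
    rcases hc.2.1 (f r) hfr (f r') hfr' with h | h | h
    · exact Or.inl ((hi4 r r' hr hr').2 h)
    · exact Or.inr (Or.inl (hi3 r r' hr hr' h))
    · exact Or.inr (Or.inr ((hi4 r' r hr' hr).2 h))
  · rintro r ⟨hr, hfr⟩ r' hr'
    have hcr' : p.cone w r' := cone_of_lt p h4 hr' hr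
    exact ⟨hcr', hc.2.2.1 (f r) hfr (f r') ((hi4 r' r hcr' hr).1 hr')⟩
  · intro β hβ
    obtain ⟨s, hs, hhs⟩ := hc.2.2.2 β hβ
    obtain ⟨t, htm, hft⟩ := hsurj s hs
    refine ⟨t, htm, ?_⟩
    rw [← (coneIso_ht p h4 ⟨hi1, hi2, hi3, hi4⟩ htm.1), hft, hhs]
  · apply Set.eq_of_subset_of_subset
    · rintro r ⟨t, ⟨_, hft⟩, rfl⟩
      exact hft
    · intro s hs
      obtain ⟨t, htm, hft⟩ := hsurj s hs
      exact ⟨t, htm, hft⟩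

theorem branch_image_inj {f : Ordinal.{u} → Ordinal.{u}} {w z : Ordinal.{u}}
    (hiso : p.IsConeIso f w z) {b b' : Set Ordinal.{u}} (hb : IsBranch p b)
    (hb' : IsBranch p b') (hw : w ∈ b) (hw' : w ∈ b') (h : f '' b = f '' b') : b = b' := by
  apply Set.eq_of_subset_of_subset
  · intro s hs
    have : f s ∈ f '' b' := h ▸ ⟨s, hs, rfl⟩
    obtain ⟨s', hs', hfs⟩ := this
    rwa [hiso.2.2.1 s' s (branch_cone p hb' hw' hs') (branch_cone p hb hw hs) hfs] at hs'
  · intro s hs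
    have : f s ∈ f '' b := h ▸ ⟨s, hs, rfl⟩
    obtain ⟨s', hs', hfs⟩ := this
    rwa [hiso.2.2.1 s' s (branch_cone p hb hw hs') (branch_cone p hb' hw' hs) hfs] at hs'

end



/-- Let `p ∈ Q`, let `ξ ≠ η` be in `D_p`, with `π^p_ξ` a tree isomorphism from
the cone of `x_ξ` onto the cone of `y_ξ` and `π^p_η` a tree isomorphism from
the cone of `x_η` onto the cone of `y_η`, and let `x ∈ T_p` be above both
`x_ξ` and `x_η`.  Then there are a condition `q ≤ p` and an ordinal `α` with
`ht(x) < α < α_q` such that `π^q_ξ(y) ≠ π^q_η(y)` for every `y ∈ T_q` of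
height `α` lying above `x`. -/
theorem Q_isomorphisms_eventually_disagree (p : QPre.{u}) (hp : IsQCond p)
    (ξ η : Ordinal.{u}) (hξ : ξ ∈ p.dp) (hη : η ∈ p.dp) (hne : ξ ≠ η)
    (xξ yξ xη yη : Ordinal.{u})
    (hxξ : xξ ∈ p.tp) (hyξ : yξ ∈ p.tp) (hxη : xη ∈ p.tp) (hyη : yη ∈ p.tp)
    (hξiso : p.ht xξ = p.ht yξ ∧ p.IsConeIso (p.pi ξ) xξ yξ)
    (hηiso : p.ht xη = p.ht yη ∧ p.IsConeIso (p.pi η) xη yη)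
    (x : Ordinal.{u}) (hx : x ∈ p.tp)
    (hxξx : p.lt xξ x ∨ xξ = x) (hxηx : p.lt xη x ∨ xη = x) :
    ∃ q : QPre.{u}, IsQCond q ∧ QLe q p ∧
      ∃ α : Ordinal.{u + 1}, p.ht x < α ∧ α < q.alphap ∧
        ∀ y ∈ q.tp, q.ht y = α → q.lt x y → q.pi ξ y ≠ q.pi η y := by
  classical
  obtain ⟨h1, h2, h3, h4, h5, h6, h7, h8, h9⟩ := id hp
  -- the witness family
  obtain ⟨W, hW1, hWξ, hWη⟩ : ∃ W : Ordinal.{u} → Ordinal.{u} × Ordinal.{u},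
      (∀ ζ ∈ p.dp, (W ζ).1 ∈ p.tp ∧ (W ζ).2 ∈ p.tp ∧ p.ht (W ζ).1 = p.ht (W ζ).2 ∧
        p.IsConeIso (p.pi ζ) (W ζ).1 (W ζ).2) ∧ W ξ = (xξ, yξ) ∧ W η = (xη, yη) := by
    refine ⟨fun ζ => if ζ = ξ then (xξ, yξ) else if ζ = η then (xη, yη) else
      if hζ : ζ ∈ p.dp then ((h9 ζ hζ).choose, (h9 ζ hζ).choose_spec.2.choose)
      else (0, 0), ?_, by simp, by simp [hne.symm]⟩
    intro ζ hζ
    by_cases e1 : ζ = ξ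
    · subst e1; simp only [if_pos rfl]; exact ⟨hxξ, hyξ, hξiso.1, hξiso.2⟩
    · by_cases e2 : ζ = η
      · subst e2; simp only [if_neg e1, if_pos rfl]; exact ⟨hxη, hyη, hηiso.1, hηiso.2⟩
      · simp only [if_neg e1, if_neg e2, dif_pos hζ]
        obtain ⟨hc1, hrest⟩ := (h9 ζ hζ).choose_spec
        obtain ⟨hc2, hc3, hc4⟩ := hrest.choose_spec
        exact ⟨hc1, hc2, hc3, hc4⟩
  -- a branch through each point
  obtain ⟨br, hbr⟩ : ∃ br : Ordinal.{u} → Set Ordinal.{u},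
      ∀ t ∈ p.tp, IsBranch p (br t) ∧ t ∈ br t := by
    refine ⟨fun t => if h : t ∈ p.tp then (exists_branch p hp h).choose else ∅, ?_⟩
    intro t htm
    simp only [dif_pos htm]
    exact (exists_branch p hp htm).choose_spec
  -- closure of the branches under the partial isomorphisms
  set opF : Ordinal.{u} → Set Ordinal.{u} → Set Ordinal.{u} :=
    fun ζ b => if (W ζ).1 ∈ b then p.pi ζ '' b else b with hopF
  set opB : Ordinal.{u} → Set Ordinal.{u} → Set Ordinal.{u} :=
    fun ζ c => if (W ζ).2 ∈ c then {t | p.cone (W ζ).1 t ∧ p.pi ζ t ∈ c} else c with hopB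
  set C : ℕ → Set (Set Ordinal.{u}) := fun n => Nat.rec (br '' p.tp)
    (fun _ Cn => Cn ∪ ⋃ ζ ∈ p.dp, (opF ζ '' Cn ∪ opB ζ '' Cn)) n with hC
  set BB : Set (Set Ordinal.{u}) := ⋃ n, C n with hBBdef
  have hCsucc : ∀ n, C (n+1) = C n ∪ ⋃ ζ ∈ p.dp, (opF ζ '' C n ∪ opB ζ '' C n) := fun n => rfl
  have hBBsub : ∀ n, C n ⊆ BB := fun n => Set.subset_iUnion C n
  have hBB_branch : ∀ b ∈ BB, IsBranch p b := by
    intro b hb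
    obtain ⟨n, hn⟩ := Set.mem_iUnion.1 hb
    clear hb
    induction n generalizing b with
    | zero =>
      obtain ⟨t, htm, rfl⟩ := hn
      exact (hbr t htm).1
    | succ n ih =>
      rw [hCsucc n] at hn
      rcases hn with hn | hn
      · exact ih b hn
      · obtain ⟨ζ, hmem⟩ := Set.mem_iUnion.1 hn
        obtain ⟨hζ, hmem⟩ := Set.mem_iUnion.1 hmem
        rcases hmem with ⟨b', hb', rfl⟩ | ⟨b', hb', rfl⟩
        · simp only [hopF]
          split
          · next hg =>
            exact (branch_image p h4 (hW1 ζ hζ).2.2.2 (hW1 ζ hζ).2.2.1 (ih b' hb') hg).1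
          · exact ih b' hb'
        · simp only [hopB]
          split
          · next hg =>
            exact (branch_preimage p h4 (hW1 ζ hζ).2.2.2 (hW1 ζ hζ).2.2.1 (ih b' hb') hg
              (hW1 ζ hζ).1).1
          · exact ih b' hb'
  have hBB_opF : ∀ b ∈ BB, ∀ ζ ∈ p.dp, (W ζ).1 ∈ b → p.pi ζ '' b ∈ BB := by
    intro b hb ζ hζ hg
    obtain ⟨n, hn⟩ := Set.mem_iUnion.1 hb
    apply hBBsub (n+1)
    rw [hCsucc n]
    refine Or.inr (Set.mem_iUnion.2 ⟨ζ, Set.mem_iUnion.2 ⟨hζ, Or.inl ⟨b, hn, ?_⟩⟩⟩)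
    simp only [hopF]
    rw [if_pos hg]
  have hBB_opB : ∀ c ∈ BB, ∀ ζ ∈ p.dp, (W ζ).2 ∈ c →
      {t | p.cone (W ζ).1 t ∧ p.pi ζ t ∈ c} ∈ BB := by
    intro c hc ζ hζ hg
    obtain ⟨n, hn⟩ := Set.mem_iUnion.1 hc
    apply hBBsub (n+1)
    rw [hCsucc n]
    refine Or.inr (Set.mem_iUnion.2 ⟨ζ, Set.mem_iUnion.2 ⟨hζ, Or.inr ⟨c, hn, ?_⟩⟩⟩)
    simp only [hopB]
    rw [if_pos hg]
  have hBB_count : BB.Countable := by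
    refine Set.countable_iUnion ?_
    intro n
    induction n with
    | zero => exact h2.image br
    | succ n ih =>
      rw [hCsucc n]
      exact ih.union (h8.biUnion fun ζ _ => (ih.image (opF ζ)).union (ih.image (opB ζ)))
  have hbrx : ∀ t ∈ p.tp, br t ∈ BB ∧ t ∈ br t :=
    fun t ht => ⟨hBBsub 0 ⟨t, ht, rfl⟩, (hbr t ht).2⟩
  -- fresh ordinals for the new level
  set BBp : Set (Set Ordinal.{u} × Bool) := BB ×ˢ (Set.univ : Set Bool) with hBBpdef
  have hBBp_count : BBp.Countable := hBB_count.prod Set.countable_univ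
  have hBBp_mem : ∀ u : Set Ordinal.{u} × Bool, u ∈ BBp ↔ u.1 ∈ BB := by
    intro u
    rw [hBBpdef, Set.mem_prod]
    simp
  have hTinf : (Set.Iio (Cardinal.aleph 1).ord \ p.tp).Infinite := by
    by_contra h
    rw [Set.not_infinite] at h
    have hcount : (Set.Iio (Cardinal.aleph 1).ord).Countable := by
      refine (h.countable.union h2).mono ?_
      intro a ha
      by_cases hm : a ∈ p.tp
      · exact Or.inr hm
      · exact Or.inl ⟨ha, hm⟩
    have hk := Cardinal.le_aleph0_iff_set_countable.2 hcount
    rw [Ordinal.mk_Iio_ordinal, Cardinal.card_ord, ← Cardinal.lift_aleph0.{u+1, u},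
      Cardinal.lift_le] at hk
    exact absurd hk (not_le.2 Cardinal.aleph0_lt_aleph_one)
  obtain ⟨en, hen⟩ := Set.countable_iff_exists_injective.1 hBBp_count
  set em := Set.Infinite.natEmbedding _ hTinf with hemdef
  set iota : Set Ordinal.{u} × Bool → Ordinal.{u} :=
    fun z => if h : z ∈ BBp then (em (en ⟨z, h⟩)).1 else 0 with hiotadef
  have hiota_mem : ∀ u ∈ BBp, iota u ∈ Set.Iio (Cardinal.aleph 1).ord ∧ iota u ∉ p.tp := by
    intro u hu
    simp only [hiotadef, dif_pos hu]
    exact ⟨(em (en ⟨u, hu⟩)).2.1, (em (en ⟨u, hu⟩)).2.2⟩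
  have hnotin : ∀ u ∈ BBp, iota u ∉ p.tp := fun u hu => (hiota_mem u hu).2
  have hiota_inj : Set.InjOn iota BBp := by
    intro a ha b hb hab
    simp only [hiotadef, dif_pos ha, dif_pos hb] at hab
    have := em.injective (Subtype.ext hab)
    have := hen this
    exact congrArg Subtype.val this
  -- the new condition
  set sw : Ordinal.{u} → Set Ordinal.{u} → Bool → Bool :=
    fun ζ b i => if ζ = ξ ∧ x ∈ b then !i else i with hswdef
  have hsw_invol : ∀ ζ b i, sw ζ b (sw ζ b i) = i := by
    intro ζ b i
    simp only [hswdef]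
    by_cases h : ζ = ξ ∧ x ∈ b <;> simp [h]
  set Tp : Set Ordinal.{u} := p.tp ∪ iota '' BBp with hTpdef
  set Lt : Ordinal.{u} → Ordinal.{u} → Prop :=
    fun s t => p.lt s t ∨ ∃ u ∈ BBp, t = iota u ∧ s ∈ u.1 with hLtdef
  set Pi : Ordinal.{u} → Ordinal.{u} → Ordinal.{u} := fun ζ a =>
    if ha : ∃ u ∈ BBp, a = iota u then
      iota (p.pi ζ '' ha.choose.1, sw ζ ha.choose.1 ha.choose.2)
    else p.pi ζ a with hPidef
  have hLtp : ∀ s t, p.lt s t → Lt s t := fun s t h => Or.inl h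
  have hLt_old : ∀ s t, t ∈ p.tp → (Lt s t ↔ p.lt s t) := by
    intro s t htm
    constructor
    · rintro (h | ⟨u, hu, rfl, _⟩)
      · exact h
      · exact absurd htm (hnotin u hu)
    · exact hLtp s t
  have hLt_new : ∀ u ∈ BBp, ∀ s, (Lt s (iota u) ↔ s ∈ u.1) := by
    intro u hu s
    constructor
    · rintro (h | ⟨u', hu', he, hs⟩)
      · exact absurd (p.lt_mem _ _ h).2 (hnotin u hu)
      · rwa [hiota_inj hu hu' he] 
    · intro hs
      exact Or.inr ⟨u, hu, rfl, hs⟩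
  have hLt_mem : ∀ s t, Lt s t → s ∈ Tp ∧ t ∈ Tp := by
    rintro s t (h | ⟨u, hu, rfl, hs⟩)
    · exact ⟨Or.inl (p.lt_mem _ _ h).1, Or.inl (p.lt_mem _ _ h).2⟩
    · exact ⟨Or.inl ((hBB_branch u.1 ((hBBp_mem u).1 hu)).1 hs),
        Or.inr (Set.mem_image_of_mem iota hu)⟩
  have hnLt : ∀ u ∈ BBp, ∀ r, ¬ Lt (iota u) r := by
    rintro u hu r (h | ⟨u', hu', _, hmem⟩)
    · exact hnotin u hu (p.lt_mem _ _ h).1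
    · exact hnotin u hu ((hBB_branch u'.1 ((hBBp_mem u').1 hu')).1 hmem)
  have hwo : ∀ t, IsWellOrder {s // Lt s t} (fun a b => Lt a.1 b.1) := by
    intro t
    by_cases htm : t ∈ p.tp
    · letI := p.wo t
      exact (relIsoOfIff (P := fun s => Lt s t) (Q := fun s => p.lt s t) (r := Lt) (r' := p.lt)
        (fun a => hLt_old a t htm)
        (fun a b _ hb => hLt_old a b (p.lt_mem _ _ ((hLt_old b t htm).1 hb)).1)
        ).toRelEmbedding.isWellOrder
    · by_cases hni : ∃ u ∈ BBp, t = iota u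
      · obtain ⟨u, hu, rfl⟩ := hni
        have hbru : IsBranch p u.1 := hBB_branch u.1 ((hBBp_mem u).1 hu)
        letI := branch_wo p h4 h5 hbru
        exact (relIsoOfIff (P := fun s => Lt s (iota u)) (Q := fun s => s ∈ u.1)
          (r := Lt) (r' := p.lt) (hLt_new u hu)
          (fun a b _ hb => hLt_old a b (hbru.1 ((hLt_new u hu b).1 hb)))
          ).toRelEmbedding.isWellOrder
      · have hemp : IsEmpty {s // Lt s t} := by
          refine ⟨fun a => ?_⟩
          rcases a.2 with h | ⟨u, hu, he, _⟩
          · exact htm (p.lt_mem _ _ h).2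
          · exact hni ⟨u, hu, he⟩
        exact { toTrichotomous := ⟨fun a => isEmptyElim a⟩,
                toIsWellFounded := ⟨⟨fun a => isEmptyElim a⟩⟩ }
  set q : QPre.{u} := ⟨Tp, Lt, p.dp, Pi, hLt_mem, hwo⟩ with hqdef
  -- heights in q
  have hht_old : ∀ t ∈ p.tp, q.ht t = p.ht t := by
    intro t htm
    letI := hwo t
    letI := p.wo t
    exact Ordinal.type_eq.2 ⟨relIsoOfIff (fun a => hLt_old a t htm)
      (fun a b _ hb => hLt_old a b (p.lt_mem _ _ ((hLt_old b t htm).1 hb)).1)⟩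
  have hht_new : ∀ u ∈ BBp, q.ht (iota u) = p.alphap := by
    intro u hu
    have hbru : IsBranch p u.1 := hBB_branch u.1 ((hBBp_mem u).1 hu)
    letI := branch_wo p h4 h5 hbru
    letI := hwo (iota u)
    have e1 : q.ht (iota u) =
        @Ordinal.type {s // s ∈ u.1} (fun a b => p.lt a.1 b.1) (branch_wo p h4 h5 hbru) :=
      Ordinal.type_eq.2 ⟨relIsoOfIff (hLt_new u hu)
        (fun a b _ hb => hLt_old a b (hbru.1 ((hLt_new u hu b).1 hb)))⟩
    rw [e1, type_branch p h4 h5 hbru]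
  have hsucc : p.alphap < p.alphap + 1 := by
    rw [Ordinal.add_one_eq_succ]; exact Order.lt_succ _
  have halphap : q.alphap = p.alphap + 1 := by
    have hmem_set : (p.alphap + 1) ∈ {α | ∀ t ∈ q.tp, q.ht t ≠ α} := by
      rintro t (htm | ⟨u, hu, rfl⟩)
      · exact ne_of_lt (((hht_old t htm).trans_lt (h5 t htm)).trans hsucc)
      · rw [hht_new u hu]; exact ne_of_lt hsucc
    apply le_antisymm
    · exact csInf_le' hmem_set
    · refine le_csInf ⟨_, hmem_set⟩ ?_
      intro γ hγ
      by_contra hlt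
      push_neg at hlt
      have hγle : γ ≤ p.alphap := by
        rwa [Ordinal.add_one_eq_succ, Order.lt_succ_iff] at hlt
      rcases lt_or_eq_of_le hγle with h | h
      · obtain ⟨t, htm, hh⟩ := exists_ht_lt_alphap p h
        exact hγ t (Or.inl htm) ((hht_old t htm).trans hh)
      · subst h
        have hmem' : ((br x, true) : Set Ordinal.{u} × Bool) ∈ BBp :=
          (hBBp_mem _).2 (hbrx x hx).1
        exact hγ (iota (br x, true)) (Or.inr (Set.mem_image_of_mem iota hmem'))
          (hht_new _ hmem')
  -- the new partial isomorphisms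
  have hPi_old : ∀ ζ a, a ∈ p.tp → Pi ζ a = p.pi ζ a := by
    intro ζ a ha
    simp only [hPidef]
    rw [dif_neg]
    rintro ⟨u, hu, rfl⟩
    exact hnotin u hu ha
  have hPi_new : ∀ ζ, ∀ u ∈ BBp, Pi ζ (iota u) = iota (p.pi ζ '' u.1, sw ζ u.1 u.2) := by
    intro ζ u hu
    have hex : ∃ u' ∈ BBp, iota u = iota u' := ⟨u, hu, rfl⟩
    simp only [hPidef, dif_pos hex]
    have hsp := hex.choose_spec
    have heq : hex.choose = u := hiota_inj hsp.1 hu hsp.2.symm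
    rw [heq]
  -- cones in q
  have hcone_old : ∀ w ∈ p.tp, ∀ t ∈ p.tp, (q.cone w t ↔ p.cone w t) := by
    intro w hw t htm
    constructor
    · rintro ⟨_, hc⟩
      refine ⟨htm, ?_⟩
      rcases hc with h | h | h
      · exact Or.inl ((hLt_old t w hw).1 h)
      · exact Or.inr (Or.inl h)
      · exact Or.inr (Or.inr ((hLt_old w t htm).1 h))
    · rintro ⟨_, hc⟩
      refine ⟨Or.inl htm, ?_⟩
      rcases hc with h | h | h
      · exact Or.inl (hLtp _ _ h)
      · exact Or.inr (Or.inl h)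
      · exact Or.inr (Or.inr (hLtp _ _ h))
  have hcone_new : ∀ w ∈ p.tp, ∀ u ∈ BBp, (q.cone w (iota u) ↔ w ∈ u.1) := by
    intro w hw u hu
    constructor
    · rintro ⟨_, hc⟩
      rcases hc with h | h | h
      · exact absurd ((hLt_old _ w hw).1 h) (fun hh => hnotin u hu (p.lt_mem _ _ hh).1)
      · exact absurd (h ▸ hw) (hnotin u hu)
      · exact (hLt_new u hu w).1 h
    · intro hmem
      exact ⟨Or.inr (Set.mem_image_of_mem iota hu), Or.inr (Or.inr ((hLt_new u hu w).2 hmem))⟩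
  have hcone_cases : ∀ w t, q.cone w t → t ∈ p.tp ∨ ∃ u ∈ BBp, t = iota u := by
    rintro w t ⟨(htm | ⟨u, hu, rfl⟩), _⟩
    · exact Or.inl htm
    · exact Or.inr ⟨u, hu, rfl⟩
  -- the cone isomorphisms of q
  have hConeIso : ∀ ζ ∈ p.dp, q.IsConeIso (Pi ζ) (W ζ).1 (W ζ).2 := by
    intro ζ hζ
    obtain ⟨hw1, hw2, hwht, hwiso⟩ := hW1 ζ hζ
    have hi1 := hwiso.1
    have hi2 := hwiso.2.1
    have hi3 := hwiso.2.2.1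
    have hi4 := hwiso.2.2.2
    have hmemBB : ∀ u ∈ BBp, (W ζ).1 ∈ u.1 →
        ((p.pi ζ '' u.1, sw ζ u.1 u.2) : Set Ordinal.{u} × Bool) ∈ BBp := by
      intro u hu hg
      exact (hBBp_mem _).2 (hBB_opF u.1 ((hBBp_mem u).1 hu) ζ hζ hg)
    refine ⟨?_, ?_, ?_, ?_⟩
    · -- maps cone into cone
      intro t hct
      rcases hcone_cases _ t hct with htm | ⟨u, hu, rfl⟩
      · have hpc : p.cone (W ζ).1 t := (hcone_old _ hw1 t htm).1 hct
        rw [hPi_old ζ t htm]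
        exact (hcone_old _ hw2 _ (hi1 t hpc).1).2 (hi1 t hpc)
      · have hwmem : (W ζ).1 ∈ u.1 := (hcone_new _ hw1 u hu).1 hct
        rw [hPi_new ζ u hu]
        have hbru := hBB_branch u.1 ((hBBp_mem u).1 hu)
        have himg := branch_image p h4 hwiso hwht hbru hwmem
        exact (hcone_new _ hw2 _ (hmemBB u hu hwmem)).2 himg.2
    · -- surjective onto cone
      intro s hcs
      rcases hcone_cases _ s hcs with hsm | ⟨u, hu, rfl⟩
      · have hpc : p.cone (W ζ).2 s := (hcone_old _ hw2 s hsm).1 hcs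
        obtain ⟨t, hct, hft⟩ := hi2 s hpc
        exact ⟨t, (hcone_old _ hw1 t hct.1).2 hct, by rw [hPi_old ζ t hct.1]; exact hft⟩
      · have hzmem : (W ζ).2 ∈ u.1 := (hcone_new _ hw2 u hu).1 hcs
        have hbru := hBB_branch u.1 ((hBBp_mem u).1 hu)
        obtain ⟨hΨbr, hΨw, hΨimg⟩ := branch_preimage p h4 hwiso hwht hbru hzmem hw1
        have hΨBB : {t | p.cone (W ζ).1 t ∧ p.pi ζ t ∈ u.1} ∈ BB :=
          hBB_opB u.1 ((hBBp_mem u).1 hu) ζ hζ hzmem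
        have hΨp : (({t | p.cone (W ζ).1 t ∧ p.pi ζ t ∈ u.1},
            sw ζ {t | p.cone (W ζ).1 t ∧ p.pi ζ t ∈ u.1} u.2) : Set Ordinal.{u} × Bool) ∈ BBp :=
          (hBBp_mem _).2 hΨBB
        refine ⟨iota ({t | p.cone (W ζ).1 t ∧ p.pi ζ t ∈ u.1},
            sw ζ {t | p.cone (W ζ).1 t ∧ p.pi ζ t ∈ u.1} u.2),
          (hcone_new _ hw1 _ hΨp).2 hΨw, ?_⟩
        rw [hPi_new ζ _ hΨp]
        have h1 : p.pi ζ '' {t | p.cone (W ζ).1 t ∧ p.pi ζ t ∈ u.1} = u.1 := hΨimg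
        rw [h1, hsw_invol]
    · -- injective on cone
      intro s t hcs hct hst
      rcases hcone_cases _ s hcs with hsm | ⟨u, hu, rfl⟩ <;>
        rcases hcone_cases _ t hct with htm2 | ⟨u', hu', rfl⟩
      · rw [hPi_old ζ s hsm, hPi_old ζ t htm2] at hst
        exact hi3 s t ((hcone_old _ hw1 s hsm).1 hcs) ((hcone_old _ hw1 t htm2).1 hct) hst
      · rw [hPi_old ζ s hsm, hPi_new ζ u' hu'] at hst
        have hwm' : (W ζ).1 ∈ u'.1 := (hcone_new _ hw1 u' hu').1 hct
        have hval : p.pi ζ s ∈ p.tp := (hi1 s ((hcone_old _ hw1 s hsm).1 hcs)).1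
        rw [hst] at hval
        exact absurd hval (hnotin _ (hmemBB u' hu' hwm'))
      · rw [hPi_old ζ t htm2, hPi_new ζ u hu] at hst
        have hwm : (W ζ).1 ∈ u.1 := (hcone_new _ hw1 u hu).1 hcs
        have hval : p.pi ζ t ∈ p.tp := (hi1 t ((hcone_old _ hw1 t htm2).1 hct)).1
        rw [← hst] at hval
        exact absurd hval (hnotin _ (hmemBB u hu hwm))
      · rw [hPi_new ζ u hu, hPi_new ζ u' hu'] at hst
        have hwm : (W ζ).1 ∈ u.1 := (hcone_new _ hw1 u hu).1 hcs
        have hwm' : (W ζ).1 ∈ u'.1 := (hcone_new _ hw1 u' hu').1 hct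
        have hbru := hBB_branch u.1 ((hBBp_mem u).1 hu)
        have hbru' := hBB_branch u'.1 ((hBBp_mem u').1 hu')
        have hpair := hiota_inj (hmemBB u hu hwm) (hmemBB u' hu' hwm') hst
        have hb_eq : u.1 = u'.1 :=
          branch_image_inj p hwiso hbru hbru' hwm hwm' (congrArg Prod.fst hpair)
        have hsnd := congrArg Prod.snd hpair
        simp only at hsnd
        rw [hb_eq] at hsnd
        have hi_eq : u.2 = u'.2 := by
          simp only [hswdef] at hsnd
          by_cases hcond : ζ = ξ ∧ x ∈ u'.1
          · simpa [hcond] using hsnd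
          · simpa [hcond] using hsnd
        rw [show u = u' from Prod.ext hb_eq hi_eq]
    · -- order preserving
      intro s t hcs hct
      rcases hcone_cases _ s hcs with hsm | ⟨u, hu, rfl⟩
      · rcases hcone_cases _ t hct with htm2 | ⟨u', hu', rfl⟩
        · rw [hPi_old ζ s hsm, hPi_old ζ t htm2]
          have hps := (hcone_old _ hw1 s hsm).1 hcs
          have hpt := (hcone_old _ hw1 t htm2).1 hct
          constructor
          · intro h
            exact hLtp _ _ ((hi4 s t hps hpt).1 ((hLt_old s t htm2).1 h))
          · intro h
            have hlt : p.lt (p.pi ζ s) (p.pi ζ t) := (hLt_old _ _ (hi1 t hpt).1).1 h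
            exact hLtp _ _ ((hi4 s t hps hpt).2 hlt)
        · rw [hPi_old ζ s hsm, hPi_new ζ u' hu']
          have hwm' : (W ζ).1 ∈ u'.1 := (hcone_new _ hw1 u' hu').1 hct
          have hbru' := hBB_branch u'.1 ((hBBp_mem u').1 hu')
          have hps := (hcone_old _ hw1 s hsm).1 hcs
          have hmid : s ∈ u'.1 ↔ p.pi ζ s ∈ p.pi ζ '' u'.1 := by
            constructor
            · exact fun h => Set.mem_image_of_mem _ h
            · rintro ⟨s', hs', heq⟩
              rwa [hi3 s' s (branch_cone p hbru' hwm' hs') hps heq] at hs'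
          exact (hLt_new u' hu' s).trans
            (hmid.trans (hLt_new _ (hmemBB u' hu' hwm') (p.pi ζ s)).symm)
      · have hwm : (W ζ).1 ∈ u.1 := (hcone_new _ hw1 u hu).1 hcs
        constructor
        · intro h
          exact absurd h (hnLt u hu t)
        · intro h
          rw [hPi_new ζ u hu] at h
          exact absurd h (hnLt _ (hmemBB u hu hwm) _)
  -- assemble everything
  refine ⟨q, ⟨?_, ?_, ?_, ?_, ?_, ?_, h7, h8, ?_⟩, ⟨?_, ?_, subset_rfl, ?_⟩,
    p.alphap, h5 x hx, ?_, ?_⟩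
  · -- tp ⊆ Iio ω₁
    rintro a (ha | ⟨u, hu, rfl⟩)
    · exact h1 ha
    · exact (hiota_mem u hu).1
  · -- countable
    exact h2.union (hBBp_count.image iota)
  · -- irreflexive
    rintro a ha (h | ⟨u, hu, he, hm⟩)
    · exact h3 a (p.lt_mem a a h).1 h
    · exact hnotin u hu (he ▸ (hBB_branch u.1 ((hBBp_mem u).1 hu)).1 hm)
  · -- transitive
    rintro a b c (hab | ⟨u', hu', rfl, hm'⟩) hbc
    · rcases hbc with h | ⟨u, hu, rfl, hm⟩
      · exact Or.inl (h4 _ _ _ hab h)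
      · exact Or.inr ⟨u, hu, rfl, (hBB_branch u.1 ((hBBp_mem u).1 hu)).2.2.1 b hm a hab⟩
    · exact absurd hbc (hnLt u' hu' c)
  · -- heights below alphap
    rintro t (htm | ⟨u, hu, rfl⟩)
    · rw [halphap, hht_old t htm]
      exact (h5 t htm).trans hsucc
    · rw [halphap, hht_new u hu]
      exact hsucc
  · -- normality
    intro t htm β hβ
    rw [halphap] at hβ
    have hβle : β ≤ p.alphap := by
      rwa [Ordinal.add_one_eq_succ, Order.lt_succ_iff] at hβ
    rcases lt_or_eq_of_le hβle with hb | hb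
    · rcases htm with htm | ⟨u, hu, rfl⟩
      · obtain ⟨s, hsm, hh, hcmp⟩ := h6 t htm β hb
        refine ⟨s, Or.inl hsm, (hht_old s hsm).trans hh, ?_⟩
        rcases hcmp with h | h | h
        · exact Or.inl (hLtp _ _ h)
        · exact Or.inr (Or.inl h)
        · exact Or.inr (Or.inr (hLtp _ _ h))
      · have hbru := hBB_branch u.1 ((hBBp_mem u).1 hu)
        obtain ⟨s, hsm, hh⟩ := hbru.2.2.2 β hb
        exact ⟨s, Or.inl (hbru.1 hsm), (hht_old s (hbru.1 hsm)).trans hh,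
          Or.inl ((hLt_new u hu s).2 hsm)⟩
    · subst hb
      rcases htm with htm | ⟨u, hu, rfl⟩
      · have hmem' : ((br t, true) : Set Ordinal.{u} × Bool) ∈ BBp :=
          (hBBp_mem _).2 (hbrx t htm).1
        exact ⟨iota (br t, true), Or.inr (Set.mem_image_of_mem iota hmem'),
          hht_new _ hmem', Or.inr (Or.inr ((hLt_new _ hmem' t).2 (hbrx t htm).2))⟩
      · exact ⟨iota u, Or.inr (Set.mem_image_of_mem iota hu), hht_new u hu,
          Or.inr (Or.inl rfl)⟩
  · -- isomorphisms of q
    intro ζ hζ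
    obtain ⟨hw1, hw2, hwht, _⟩ := hW1 ζ hζ
    exact ⟨(W ζ).1, Or.inl hw1, (W ζ).2, Or.inl hw2,
      by rw [hht_old _ hw1, hht_old _ hw2]; exact hwht, hConeIso ζ hζ⟩
  · -- QLe: end-extension set equality
    ext t
    constructor
    · intro h
      exact ⟨Or.inl h, (hht_old t h).trans_lt (h5 t h)⟩
    · rintro ⟨(htm | ⟨u, hu, rfl⟩), hlt⟩
      · exact htm
      · rw [hht_new u hu] at hlt
        exact absurd hlt (lt_irrefl _)
  · -- QLe: order agreement
    intro a b _ hb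
    exact ⟨hLtp a b, fun h => (hLt_old a b hb).1 h⟩
  · -- QLe: pi agreement
    intro ζ _ t htm
    exact hPi_old ζ t htm
  · -- alphap grows
    rw [halphap]; exact hsucc
  · -- the disagreement at the new level
    intro y hy hhy hxy
    rcases hy with hym | ⟨u, hu, rfl⟩
    · rw [hht_old y hym] at hhy
      exact absurd (hhy ▸ h5 y hym) (lt_irrefl _)
    · have hxu : x ∈ u.1 := (hLt_new u hu x).1 hxy
      have hbru := hBB_branch u.1 ((hBBp_mem u).1 hu)
      have hxξu : xξ ∈ u.1 := by
        rcases hxξx with h | h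
        · exact hbru.2.2.1 x hxu xξ h
        · exact h ▸ hxu
      have hxηu : xη ∈ u.1 := by
        rcases hxηx with h | h
        · exact hbru.2.2.1 x hxu xη h
        · exact h ▸ hxu
      show Pi ξ (iota u) ≠ Pi η (iota u)
      rw [hPi_new ξ u hu, hPi_new η u hu]
      intro heq
      have hWξ1 : (W ξ).1 ∈ u.1 := by rw [hWξ]; exact hxξu
      have hWη1 : (W η).1 ∈ u.1 := by rw [hWη]; exact hxηu
      have hm1 : ((p.pi ξ '' u.1, sw ξ u.1 u.2) : Set Ordinal.{u} × Bool) ∈ BBp :=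
        (hBBp_mem _).2 (hBB_opF u.1 ((hBBp_mem u).1 hu) ξ hξ hWξ1)
      have hm2 : ((p.pi η '' u.1, sw η u.1 u.2) : Set Ordinal.{u} × Bool) ∈ BBp :=
        (hBBp_mem _).2 (hBB_opF u.1 ((hBBp_mem u).1 hu) η hη hWη1)
      have hpair := hiota_inj hm1 hm2 heq
      have hsnd := congrArg Prod.snd hpair
      simp only at hsnd
      simp only [hswdef] at hsnd
      rw [if_pos (⟨trivial, hxu⟩ : True ∧ x ∈ u.1),
        if_neg (fun hcon => hne hcon.1.symm)] at hsnd
      simp at hsnd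
end
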